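/- arXiv:1504.06943 — 3 statements merged into one kernel-verified Lean document; each statement's English description precedes it below -/
import Mathlib

section
/- Adversary bound for direct sums and tensor products of unitary implementations: let D be a finite set, X, Z, Z′ finite-dimensional complex inner product spaces, and for each x ∈ D let O_x be a unitary on X, V_x a unitary on Z, and W_x a unitary on Z′. Then: (i) γ₂((V_x ⊕ W_x − V_y ⊕ W_y)_{x,y∈D} | (O_x − O_y)_{x,y∈D}) = max{γ₂((V_x − V_y)_{x,y} | (O_x − O_y)_{x,y}), γ₂((W_x − W_y)_{x,y} | (O_x − O_y)_{x,y})}; (ii) if both γ₂((V_x − V_y)_{x,y} | (O_x − O_y)_{x,y}) and γ₂((W_x − W_y)_{x,y} | (O_x − O_y)_{x,y}) are finite, then γ₂((V_x ⊗ W_x − V_y ⊗ W_y)_{x,y∈D} | (O_x − O_y)_{x,y∈D}) ≤ γ₂((V_x − V_y)_{x,y} | (O_x − O_y)_{x,y}) + γ₂((W_x − W_y)_{x,y} | (O_x − O_y)_{x,y}). -/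
noncomputable section

open scoped ENNReal ComplexOrder

/-- A linear endomorphism of a finite-dimensional complex inner product space is unitary. -/
def IsUnitaryMap {E : Type*} [NormedAddCommGroup E] [InnerProductSpace ℂ E]
    [FiniteDimensional ℂ E] (f : E →ₗ[ℂ] E) : Prop :=
  LinearMap.adjoint f ∘ₗ f = LinearMap.id ∧ f ∘ₗ LinearMap.adjoint f = LinearMap.id

/-- Operator norm of a linear map between finite-dimensional inner product spaces. -/
noncomputable def opNorm {E F : Type*} [NormedAddCommGroup E] [InnerProductSpace ℂ E]
    [NormedAddCommGroup F] [InnerProductSpace ℂ F] [FiniteDimensional ℂ E]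
    (f : E →ₗ[ℂ] F) : ℝ :=
  ‖LinearMap.toContinuousLinearMap f‖

/-- A complex scalar viewed as a linear map `ℂ → ℂ`. -/
noncomputable def scalarMap (c : ℂ) : ℂ →ₗ[ℂ] ℂ := c • LinearMap.id

/-- The block-diagonal map `⊕ᵢ Δᵢ` on an `ℓ²`-direct sum of copies of a space. -/
noncomputable def piBlock {ι : Type*} [Fintype ι] {X₁ X₂ : Type*}
    [NormedAddCommGroup X₁] [InnerProductSpace ℂ X₁]
    [NormedAddCommGroup X₂] [InnerProductSpace ℂ X₂]
    (Δ : ι → (X₂ →ₗ[ℂ] X₁)) :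
    PiLp 2 (fun _ : ι => X₂) →ₗ[ℂ] PiLp 2 (fun _ : ι => X₁) :=
  (WithLp.linearEquiv 2 ℂ (∀ _ : ι, X₁)).symm.toLinearMap ∘ₗ
    (LinearMap.pi fun i => Δ i ∘ₗ LinearMap.proj i) ∘ₗ
      (WithLp.linearEquiv 2 ℂ (∀ _ : ι, X₂)).toLinearMap

/-- The relative `γ₂`-norm `γ₂(A | Δ)` of a family `A = (A_{xy} : Z₂ → Z₁)` relative to a
family `Δ = (Δ_{xy} : X₂ → X₁)`: the infimum over `k ∈ ℕ` and factorizations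
`A_{xy} = Υ_x* ∘ (Δ_{xy} ⊗ id_{ℂᵏ}) ∘ Φ_y` of `max (max_x ‖Υ_x‖²) (max_y ‖Φ_y‖²)`,
where `X ⊗ ℂᵏ` is realized as the `ℓ²`-direct sum of `k` copies of `X`.
The infimum of the empty set is `+∞`. -/
noncomputable def relGamma2 {D₁ D₂ : Type*} [Fintype D₁] [Fintype D₂]
    {X₁ X₂ Z₁ Z₂ : Type*}
    [NormedAddCommGroup X₁] [InnerProductSpace ℂ X₁] [FiniteDimensional ℂ X₁]
    [NormedAddCommGroup X₂] [InnerProductSpace ℂ X₂] [FiniteDimensional ℂ X₂]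
    [NormedAddCommGroup Z₁] [InnerProductSpace ℂ Z₁] [FiniteDimensional ℂ Z₁]
    [NormedAddCommGroup Z₂] [InnerProductSpace ℂ Z₂] [FiniteDimensional ℂ Z₂]
    (A : D₁ → D₂ → (Z₂ →ₗ[ℂ] Z₁)) (Δ : D₁ → D₂ → (X₂ →ₗ[ℂ] X₁)) : ℝ≥0∞ :=
  ⨅ (k : ℕ) (Υ : D₁ → (Z₁ →ₗ[ℂ] PiLp 2 (fun _ : Fin k => X₁)))
    (Φ : D₂ → (Z₂ →ₗ[ℂ] PiLp 2 (fun _ : Fin k => X₂)))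
    (_ : ∀ x y, A x y =
      LinearMap.adjoint (Υ x) ∘ₗ piBlock (fun _ : Fin k => Δ x y) ∘ₗ Φ y),
    (⨆ x, ENNReal.ofReal (opNorm (Υ x) ^ 2)) ⊔ (⨆ y, ENNReal.ofReal (opNorm (Φ y) ^ 2))

/-- Block-diagonal direct sum `f ⊕ g` on the `ℓ²`-direct sum of two spaces. -/
noncomputable def dsum {E E' F F' : Type*}
    [NormedAddCommGroup E] [InnerProductSpace ℂ E]
    [NormedAddCommGroup E'] [InnerProductSpace ℂ E']
    [NormedAddCommGroup F] [InnerProductSpace ℂ F]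
    [NormedAddCommGroup F'] [InnerProductSpace ℂ F']
    (f : E →ₗ[ℂ] F) (g : E' →ₗ[ℂ] F') :
    WithLp 2 (E × E') →ₗ[ℂ] WithLp 2 (F × F') :=
  (WithLp.linearEquiv 2 ℂ (F × F')).symm.toLinearMap ∘ₗ
    (LinearMap.prodMap f g) ∘ₗ (WithLp.linearEquiv 2 ℂ (E × E')).toLinearMap

/-- A realization of the tensor product of two finite-dimensional complex inner product
spaces `Z, Z'` inside a space `ZW`: a bilinear map `t` whose image spans `ZW` and which
multiplies inner products of pure tensors (`⟨a ⊗ b, c ⊗ d⟩ = ⟨a,c⟩⟨b,d⟩`). -/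
structure TensorStructure (Z Z' ZW : Type*)
    [NormedAddCommGroup Z] [InnerProductSpace ℂ Z]
    [NormedAddCommGroup Z'] [InnerProductSpace ℂ Z']
    [NormedAddCommGroup ZW] [InnerProductSpace ℂ ZW] where
  t : Z →ₗ[ℂ] Z' →ₗ[ℂ] ZW
  inner_t : ∀ (a c : Z) (b d : Z'),
    (inner ℂ (t a b) (t c d) : ℂ) = (inner ℂ a c : ℂ) * (inner ℂ b d : ℂ)
  span_t : Submodule.span ℂ (Set.range fun p : Z × Z' => t p.1 p.2) = ⊤

open scoped InnerProductSpace

section helpers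
variable {E F : Type*} [NormedAddCommGroup E] [InnerProductSpace ℂ E]
    [NormedAddCommGroup F] [InnerProductSpace ℂ F] [FiniteDimensional ℂ E]

lemma opNorm_nonneg (f : E →ₗ[ℂ] F) : 0 ≤ opNorm f := norm_nonneg _

lemma le_opNorm (f : E →ₗ[ℂ] F) (z : E) : ‖f z‖ ≤ opNorm f * ‖z‖ := by
  simpa [opNorm] using (LinearMap.toContinuousLinearMap f).le_opNorm z

lemma opNorm_le_bound (f : E →ₗ[ℂ] F) {M : ℝ} (hM : 0 ≤ M) (h : ∀ z, ‖f z‖ ≤ M * ‖z‖) :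
    opNorm f ≤ M := ContinuousLinearMap.opNorm_le_bound _ hM (by simpa using h)

lemma ofReal_sq_mono {a b : ℝ} (ha : 0 ≤ a) (h : a ≤ b) :
    ENNReal.ofReal (a ^ 2) ≤ ENNReal.ofReal (b ^ 2) :=
  ENNReal.ofReal_le_ofReal (by nlinarith)

end helpers

lemma piBlock_apply {ι : Type*} [Fintype ι] {X₁ X₂ : Type*}
    [NormedAddCommGroup X₁] [InnerProductSpace ℂ X₁]
    [NormedAddCommGroup X₂] [InnerProductSpace ℂ X₂]
    (Δ : ι → (X₂ →ₗ[ℂ] X₁)) (v : PiLp 2 (fun _ : ι => X₂)) (i : ι) :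
    piBlock Δ v i = Δ i (v i) := rfl

variable {D₁ D₂ : Type*} [Fintype D₁] [Fintype D₂] {X₁ X₂ Z₁ Z₂ : Type*}
    [NormedAddCommGroup X₁] [InnerProductSpace ℂ X₁] [FiniteDimensional ℂ X₁]
    [NormedAddCommGroup X₂] [InnerProductSpace ℂ X₂] [FiniteDimensional ℂ X₂]
    [NormedAddCommGroup Z₁] [InnerProductSpace ℂ Z₁] [FiniteDimensional ℂ Z₁]
    [NormedAddCommGroup Z₂] [InnerProductSpace ℂ Z₂] [FiniteDimensional ℂ Z₂]

lemma factor_iff {ι : Type*} [Fintype ι] (A : Z₂ →ₗ[ℂ] Z₁) (Δk : ι → (X₂ →ₗ[ℂ] X₁))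
    (U : Z₁ →ₗ[ℂ] PiLp 2 (fun _ : ι => X₁)) (P : Z₂ →ₗ[ℂ] PiLp 2 (fun _ : ι => X₂)) :
    A = LinearMap.adjoint U ∘ₗ piBlock Δk ∘ₗ P ↔
      ∀ w v, ⟪w, A v⟫_ℂ = ⟪U w, piBlock Δk (P v)⟫_ℂ := by
  constructor
  · rintro rfl w v
    simp [LinearMap.comp_apply, LinearMap.adjoint_inner_right]
  · intro h
    apply LinearMap.ext; intro v
    apply ext_inner_left ℂ; intro w
    rw [h]
    simp [LinearMap.comp_apply, LinearMap.adjoint_inner_right]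

lemma relGamma2_le_general {ι : Type} [Fintype ι]
    (A : D₁ → D₂ → (Z₂ →ₗ[ℂ] Z₁)) (Δ : D₁ → D₂ → (X₂ →ₗ[ℂ] X₁))
    (Υ : D₁ → (Z₁ →ₗ[ℂ] PiLp 2 (fun _ : ι => X₁)))
    (Φ : D₂ → (Z₂ →ₗ[ℂ] PiLp 2 (fun _ : ι => X₂)))
    (hfact : ∀ x y, A x y =
      LinearMap.adjoint (Υ x) ∘ₗ piBlock (fun _ : ι => Δ x y) ∘ₗ Φ y) :
    relGamma2 A Δ ≤
      (⨆ x, ENNReal.ofReal (opNorm (Υ x) ^ 2)) ⊔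
        (⨆ y, ENNReal.ofReal (opNorm (Φ y) ^ 2)) := by
  classical
  set k := Fintype.card ι with hk
  set e : ι ≃ Fin k := Fintype.equivFin ι with he
  set E₁ := LinearIsometryEquiv.piLpCongrLeft 2 ℂ X₁ e with hE₁
  set E₂ := LinearIsometryEquiv.piLpCongrLeft 2 ℂ X₂ e with hE₂
  have hcomm : ∀ (δ : X₂ →ₗ[ℂ] X₁) (u : PiLp 2 (fun _ : ι => X₂)),
      piBlock (fun _ : Fin k => δ) (E₂ u) = E₁ (piBlock (fun _ : ι => δ) u) := by
    intro δ u
    rfl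
  refine le_trans (iInf_le_of_le k <| iInf_le_of_le (fun x => E₁.toLinearMap ∘ₗ Υ x) <|
    iInf_le_of_le (fun y => E₂.toLinearMap ∘ₗ Φ y) <| iInf_le_of_le ?_ le_rfl) ?_
  · intro x y
    rw [factor_iff]
    intro w v
    have h := (factor_iff (A x y) (fun _ : ι => Δ x y) (Υ x) (Φ y)).mp (hfact x y) w v
    simp only [LinearMap.comp_apply, LinearIsometryEquiv.coe_toLinearEquiv,
      LinearEquiv.coe_coe]
    rw [hcomm, LinearIsometryEquiv.inner_map_map]
    exact h
  · apply sup_le_sup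
    · apply iSup_mono
      intro x
      apply ofReal_sq_mono (opNorm_nonneg _)
      apply opNorm_le_bound _ (opNorm_nonneg _)
      intro z
      simp only [LinearMap.comp_apply, LinearEquiv.coe_coe,
        LinearIsometryEquiv.coe_toLinearEquiv, LinearIsometryEquiv.norm_map]
      exact le_opNorm _ _
    · apply iSup_mono
      intro y
      apply ofReal_sq_mono (opNorm_nonneg _)
      apply opNorm_le_bound _ (opNorm_nonneg _)
      intro z
      simp only [LinearMap.comp_apply, LinearEquiv.coe_coe,
        LinearIsometryEquiv.coe_toLinearEquiv, LinearIsometryEquiv.norm_map]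
      exact le_opNorm _ _

lemma relGamma2_comp_le {Z₁' Z₂' : Type*}
    [NormedAddCommGroup Z₁'] [InnerProductSpace ℂ Z₁'] [FiniteDimensional ℂ Z₁']
    [NormedAddCommGroup Z₂'] [InnerProductSpace ℂ Z₂'] [FiniteDimensional ℂ Z₂']
    (A : D₁ → D₂ → (Z₂ →ₗ[ℂ] Z₁)) (Δ : D₁ → D₂ → (X₂ →ₗ[ℂ] X₁))
    (L : Z₁' →ₗ[ℂ] Z₁) (R : Z₂' →ₗ[ℂ] Z₂)
    (hL : ∀ z, ‖L z‖ ≤ ‖z‖) (hR : ∀ z, ‖R z‖ ≤ ‖z‖) :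
    relGamma2 (fun x y => LinearMap.adjoint L ∘ₗ A x y ∘ₗ R) Δ ≤ relGamma2 A Δ := by
  rw [relGamma2]
  refine le_iInf fun k => le_iInf fun Υ => le_iInf fun Φ => le_iInf fun h => ?_
  refine le_trans (relGamma2_le_general _ _ (fun x => Υ x ∘ₗ L) (fun y => Φ y ∘ₗ R) ?_) ?_
  · intro x y
    rw [factor_iff]
    intro w v
    have h' := (factor_iff (A x y) (fun _ : Fin k => Δ x y) (Υ x) (Φ y)).mp (h x y) (L w) (R v)
    simp only [LinearMap.comp_apply, LinearMap.adjoint_inner_right]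
    simpa using h'
  · apply sup_le_sup
    · apply iSup_mono
      intro x
      apply ofReal_sq_mono (opNorm_nonneg _)
      apply opNorm_le_bound _ (opNorm_nonneg _)
      intro z
      exact le_trans (le_opNorm (Υ x) (L z))
        (mul_le_mul_of_nonneg_left (hL z) (opNorm_nonneg _))
    · apply iSup_mono
      intro y
      apply ofReal_sq_mono (opNorm_nonneg _)
      apply opNorm_le_bound _ (opNorm_nonneg _)
      intro z
      exact le_trans (le_opNorm (Φ y) (R z))
        (mul_le_mul_of_nonneg_left (hR z) (opNorm_nonneg _))

section stack

variable {E E' X : Type*} [NormedAddCommGroup E] [InnerProductSpace ℂ E]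
    [NormedAddCommGroup E'] [InnerProductSpace ℂ E']
    [NormedAddCommGroup X] [InnerProductSpace ℂ X]

/-- Stack two `PiLp`-valued maps into one indexed by a sum type. -/
noncomputable def stack {ι κ : Type*} (F : E →ₗ[ℂ] PiLp 2 (fun _ : ι => X))
    (G : E →ₗ[ℂ] PiLp 2 (fun _ : κ => X)) :
    E →ₗ[ℂ] PiLp 2 (fun _ : ι ⊕ κ => X) where
  toFun u := WithLp.toLp 2 (fun i => Sum.elim (F u) (G u) i)
  map_add' u v := by ext i; cases i <;> simp
  map_smul' c u := by ext i; cases i <;> simp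

@[simp] lemma stack_apply_inl {ι κ : Type*} (F : E →ₗ[ℂ] PiLp 2 (fun _ : ι => X))
    (G : E →ₗ[ℂ] PiLp 2 (fun _ : κ => X)) (u : E) (i : ι) :
    stack F G u (Sum.inl i) = F u i := rfl

@[simp] lemma stack_apply_inr {ι κ : Type*} (F : E →ₗ[ℂ] PiLp 2 (fun _ : ι => X))
    (G : E →ₗ[ℂ] PiLp 2 (fun _ : κ => X)) (u : E) (i : κ) :
    stack F G u (Sum.inr i) = G u i := rfl

lemma stack_norm_sq {ι κ : Type*} [Fintype ι] [Fintype κ]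
    (F : E →ₗ[ℂ] PiLp 2 (fun _ : ι => X)) (G : E →ₗ[ℂ] PiLp 2 (fun _ : κ => X)) (u : E) :
    ‖stack F G u‖ ^ 2 = ‖F u‖ ^ 2 + ‖G u‖ ^ 2 := by
  rw [PiLp.norm_sq_eq_of_L2, Fintype.sum_sum_type, PiLp.norm_sq_eq_of_L2,
    PiLp.norm_sq_eq_of_L2]
  rfl

lemma stack_inner {ι κ : Type*} [Fintype ι] [Fintype κ] {X' : Type*}
    [NormedAddCommGroup X'] [InnerProductSpace ℂ X'] (δ : X' →ₗ[ℂ] X)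
    (F : E →ₗ[ℂ] PiLp 2 (fun _ : ι => X)) (G : E →ₗ[ℂ] PiLp 2 (fun _ : κ => X))
    (F' : E' →ₗ[ℂ] PiLp 2 (fun _ : ι => X')) (G' : E' →ₗ[ℂ] PiLp 2 (fun _ : κ => X'))
    (w : E) (v : E') :
    ⟪stack F G w, piBlock (fun _ : ι ⊕ κ => δ) (stack F' G' v)⟫_ℂ =
      ⟪F w, piBlock (fun _ : ι => δ) (F' v)⟫_ℂ +
        ⟪G w, piBlock (fun _ : κ => δ) (G' v)⟫_ℂ := by
  simp only [PiLp.inner_apply, piBlock_apply]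
  rw [Fintype.sum_sum_type]
  rfl

/-- `ℓ²` first/second projections and inclusions. -/
noncomputable def fstL : WithLp 2 (E × E') →ₗ[ℂ] E :=
  LinearMap.fst ℂ E E' ∘ₗ (WithLp.linearEquiv 2 ℂ (E × E')).toLinearMap

noncomputable def sndL : WithLp 2 (E × E') →ₗ[ℂ] E' :=
  LinearMap.snd ℂ E E' ∘ₗ (WithLp.linearEquiv 2 ℂ (E × E')).toLinearMap

noncomputable def inlL : E →ₗ[ℂ] WithLp 2 (E × E') :=
  (WithLp.linearEquiv 2 ℂ (E × E')).symm.toLinearMap ∘ₗ LinearMap.inl ℂ E E'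

noncomputable def inrL : E' →ₗ[ℂ] WithLp 2 (E × E') :=
  (WithLp.linearEquiv 2 ℂ (E × E')).symm.toLinearMap ∘ₗ LinearMap.inr ℂ E E'

@[simp] lemma fstL_apply (u : WithLp 2 (E × E')) : fstL u = u.fst := rfl
@[simp] lemma sndL_apply (u : WithLp 2 (E × E')) : sndL u = u.snd := rfl
@[simp] lemma inlL_apply_fst (z : E) : (inlL (E' := E') z).fst = z := rfl
@[simp] lemma inlL_apply_snd (z : E) : (inlL (E' := E') z).snd = 0 := rfl
@[simp] lemma inrL_apply_fst (z : E') : (inrL (E := E) z).fst = 0 := rfl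
@[simp] lemma inrL_apply_snd (z : E') : (inrL (E := E) z).snd = z := rfl

lemma norm_inlL (z : E) : ‖inlL (E' := E') z‖ = ‖z‖ := by
  have h := WithLp.prod_norm_sq_eq_of_L2 (inlL (E' := E') z)
  simp only [inlL_apply_fst, inlL_apply_snd, norm_zero] at h
  nlinarith [norm_nonneg (inlL (E' := E') z), norm_nonneg z]

lemma norm_inrL (z : E') : ‖inrL (E := E) z‖ = ‖z‖ := by
  have h := WithLp.prod_norm_sq_eq_of_L2 (inrL (E := E) z)
  simp only [inrL_apply_fst, inrL_apply_snd, norm_zero] at h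
  nlinarith [norm_nonneg (inrL (E := E) z), norm_nonneg z]

lemma adjoint_inlL_apply [FiniteDimensional ℂ E] [FiniteDimensional ℂ E']
    (u : WithLp 2 (E × E')) : LinearMap.adjoint (inlL (E' := E')) u = u.fst := by
  apply ext_inner_right ℂ
  intro z
  rw [LinearMap.adjoint_inner_left]
  rw [WithLp.prod_inner_apply]
  simp

lemma adjoint_inrL_apply [FiniteDimensional ℂ E] [FiniteDimensional ℂ E']
    (u : WithLp 2 (E × E')) : LinearMap.adjoint (inrL (E := E)) u = u.snd := by
  apply ext_inner_right ℂ
  intro z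
  rw [LinearMap.adjoint_inner_left]
  rw [WithLp.prod_inner_apply]
  simp

@[simp] lemma dsum_apply_fst {F F' : Type*} [NormedAddCommGroup F] [InnerProductSpace ℂ F]
    [NormedAddCommGroup F'] [InnerProductSpace ℂ F'] (f : E →ₗ[ℂ] F) (g : E' →ₗ[ℂ] F')
    (u : WithLp 2 (E × E')) : (dsum f g u).fst = f u.fst := rfl

@[simp] lemma dsum_apply_snd {F F' : Type*} [NormedAddCommGroup F] [InnerProductSpace ℂ F]
    [NormedAddCommGroup F'] [InnerProductSpace ℂ F'] (f : E →ₗ[ℂ] F) (g : E' →ₗ[ℂ] F')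
    (u : WithLp 2 (E × E')) : (dsum f g u).snd = g u.snd := rfl

end stack

lemma sq_le_helper {a b : ℝ} (hb : 0 ≤ b) (h : a ^ 2 ≤ b ^ 2) (ha : 0 ≤ a) : a ≤ b := by
  nlinarith

lemma relGamma2_lt_elim {A : D₁ → D₂ → (Z₂ →ₗ[ℂ] Z₁)} {Δ : D₁ → D₂ → (X₂ →ₗ[ℂ] X₁)}
    {C : ℝ≥0∞} (h : relGamma2 A Δ < C) :
    ∃ (k : ℕ) (Υ : D₁ → (Z₁ →ₗ[ℂ] PiLp 2 (fun _ : Fin k => X₁)))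
      (Φ : D₂ → (Z₂ →ₗ[ℂ] PiLp 2 (fun _ : Fin k => X₂))),
      (∀ x y, A x y =
        LinearMap.adjoint (Υ x) ∘ₗ piBlock (fun _ : Fin k => Δ x y) ∘ₗ Φ y) ∧
      (⨆ x, ENNReal.ofReal (opNorm (Υ x) ^ 2)) ⊔
        (⨆ y, ENNReal.ofReal (opNorm (Φ y) ^ 2)) < C := by
  rw [relGamma2] at h
  simp only [iInf_lt_iff] at h
  obtain ⟨k, Υ, Φ, hf, hb⟩ := h
  exact ⟨k, Υ, Φ, hf, hb⟩

/-- Part (i), lower bound: each summand's γ₂ is at most γ₂ of the direct sum. -/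
lemma dsum_lower {D : Type} [Fintype D] {X Z Z' : Type}
    [NormedAddCommGroup X] [InnerProductSpace ℂ X] [FiniteDimensional ℂ X]
    [NormedAddCommGroup Z] [InnerProductSpace ℂ Z] [FiniteDimensional ℂ Z]
    [NormedAddCommGroup Z'] [InnerProductSpace ℂ Z'] [FiniteDimensional ℂ Z']
    (Δ : D → D → (X →ₗ[ℂ] X)) (V : D → (Z →ₗ[ℂ] Z)) (W : D → (Z' →ₗ[ℂ] Z')) :
    relGamma2 (fun x y => V x - V y) Δ ≤
      relGamma2 (fun x y => dsum (V x) (W x) - dsum (V y) (W y)) Δ := by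
  have key : (fun x y => V x - V y) = fun x y =>
      LinearMap.adjoint (inlL (E := Z) (E' := Z')) ∘ₗ
        (dsum (V x) (W x) - dsum (V y) (W y)) ∘ₗ inlL := by
    funext x y
    apply LinearMap.ext
    intro z
    simp only [LinearMap.comp_apply, LinearMap.sub_apply]
    rw [map_sub, adjoint_inlL_apply, adjoint_inlL_apply]
    simp
  rw [key]
  exact relGamma2_comp_le _ _ _ _ (fun z => (norm_inlL z).le) (fun z => (norm_inlL z).le)

lemma dsum_lower' {D : Type} [Fintype D] {X Z Z' : Type}
    [NormedAddCommGroup X] [InnerProductSpace ℂ X] [FiniteDimensional ℂ X]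
    [NormedAddCommGroup Z] [InnerProductSpace ℂ Z] [FiniteDimensional ℂ Z]
    [NormedAddCommGroup Z'] [InnerProductSpace ℂ Z'] [FiniteDimensional ℂ Z']
    (Δ : D → D → (X →ₗ[ℂ] X)) (V : D → (Z →ₗ[ℂ] Z)) (W : D → (Z' →ₗ[ℂ] Z')) :
    relGamma2 (fun x y => W x - W y) Δ ≤
      relGamma2 (fun x y => dsum (V x) (W x) - dsum (V y) (W y)) Δ := by
  have key : (fun x y => W x - W y) = fun x y =>
      LinearMap.adjoint (inrL (E := Z) (E' := Z')) ∘ₗ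
        (dsum (V x) (W x) - dsum (V y) (W y)) ∘ₗ inrL := by
    funext x y
    apply LinearMap.ext
    intro z
    simp only [LinearMap.comp_apply, LinearMap.sub_apply]
    rw [map_sub, adjoint_inrL_apply, adjoint_inrL_apply]
    simp
  rw [key]
  exact relGamma2_comp_le _ _ _ _ (fun z => (norm_inrL z).le) (fun z => (norm_inrL z).le)

/-- Part (i), upper bound construction from two explicit factorizations. -/
lemma dsum_upper_step {D : Type} [Fintype D] {X Z Z' : Type}
    [NormedAddCommGroup X] [InnerProductSpace ℂ X] [FiniteDimensional ℂ X]
    [NormedAddCommGroup Z] [InnerProductSpace ℂ Z] [FiniteDimensional ℂ Z]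
    [NormedAddCommGroup Z'] [InnerProductSpace ℂ Z'] [FiniteDimensional ℂ Z']
    (Δ : D → D → (X →ₗ[ℂ] X)) (V : D → (Z →ₗ[ℂ] Z)) (W : D → (Z' →ₗ[ℂ] Z'))
    {k₁ k₂ : ℕ}
    (Υ₁ : D → (Z →ₗ[ℂ] PiLp 2 (fun _ : Fin k₁ => X)))
    (Φ₁ : D → (Z →ₗ[ℂ] PiLp 2 (fun _ : Fin k₁ => X)))
    (Υ₂ : D → (Z' →ₗ[ℂ] PiLp 2 (fun _ : Fin k₂ => X)))
    (Φ₂ : D → (Z' →ₗ[ℂ] PiLp 2 (fun _ : Fin k₂ => X)))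
    (h₁ : ∀ x y, V x - V y =
      LinearMap.adjoint (Υ₁ x) ∘ₗ piBlock (fun _ : Fin k₁ => Δ x y) ∘ₗ Φ₁ y)
    (h₂ : ∀ x y, W x - W y =
      LinearMap.adjoint (Υ₂ x) ∘ₗ piBlock (fun _ : Fin k₂ => Δ x y) ∘ₗ Φ₂ y) :
    relGamma2 (fun x y => dsum (V x) (W x) - dsum (V y) (W y)) Δ ≤
      ((⨆ x, ENNReal.ofReal (opNorm (Υ₁ x) ^ 2)) ⊔
        (⨆ y, ENNReal.ofReal (opNorm (Φ₁ y) ^ 2))) ⊔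
      ((⨆ x, ENNReal.ofReal (opNorm (Υ₂ x) ^ 2)) ⊔
        (⨆ y, ENNReal.ofReal (opNorm (Φ₂ y) ^ 2))) := by
  set Υ : D → (WithLp 2 (Z × Z') →ₗ[ℂ] PiLp 2 (fun _ : Fin k₁ ⊕ Fin k₂ => X)) :=
    fun x => stack (Υ₁ x ∘ₗ fstL) (Υ₂ x ∘ₗ sndL) with hΥ
  set Φ : D → (WithLp 2 (Z × Z') →ₗ[ℂ] PiLp 2 (fun _ : Fin k₁ ⊕ Fin k₂ => X)) :=
    fun y => stack (Φ₁ y ∘ₗ fstL) (Φ₂ y ∘ₗ sndL) with hΦ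
  refine le_trans (relGamma2_le_general _ _ Υ Φ ?_) ?_
  · intro x y
    rw [factor_iff]
    intro w v
    rw [hΥ, hΦ, stack_inner]
    simp only [LinearMap.comp_apply, fstL_apply, sndL_apply]
    have e₁ := (factor_iff _ _ _ _).mp (h₁ x y) w.fst v.fst
    have e₂ := (factor_iff _ _ _ _).mp (h₂ x y) w.snd v.snd
    rw [← e₁, ← e₂, WithLp.prod_inner_apply]
    simp only [LinearMap.sub_apply, dsum_apply_fst, dsum_apply_snd, map_sub]
    rfl
  · -- norm bounds
    apply sup_le
    · apply iSup_le
      intro x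
      set c := max (opNorm (Υ₁ x)) (opNorm (Υ₂ x)) with hc
      have hc0 : 0 ≤ c := le_trans (opNorm_nonneg (Υ₁ x)) (le_max_left _ _)
      have hb : opNorm (Υ x) ≤ c := by
        apply opNorm_le_bound _ hc0
        intro u
        refine sq_le_helper (by positivity) ?_ (norm_nonneg _)
        have b1 : ‖(Υ₁ x ∘ₗ fstL) u‖ ≤ c * ‖u.fst‖ :=
          le_trans (le_opNorm (Υ₁ x) u.fst)
            (mul_le_mul_of_nonneg_right (le_max_left _ _) (norm_nonneg _))
        have b2 : ‖(Υ₂ x ∘ₗ sndL) u‖ ≤ c * ‖u.snd‖ :=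
          le_trans (le_opNorm (Υ₂ x) u.snd)
            (mul_le_mul_of_nonneg_right (le_max_right _ _) (norm_nonneg _))
        have s1 : ‖(Υ₁ x ∘ₗ fstL) u‖ ^ 2 ≤ c ^ 2 * ‖u.fst‖ ^ 2 := by
          rw [← mul_pow]; exact pow_le_pow_left₀ (norm_nonneg _) b1 2
        have s2 : ‖(Υ₂ x ∘ₗ sndL) u‖ ^ 2 ≤ c ^ 2 * ‖u.snd‖ ^ 2 := by
          rw [← mul_pow]; exact pow_le_pow_left₀ (norm_nonneg _) b2 2
        rw [hΥ, stack_norm_sq, mul_pow, WithLp.prod_norm_sq_eq_of_L2, mul_add]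
        exact add_le_add s1 s2
      calc ENNReal.ofReal (opNorm (Υ x) ^ 2)
          ≤ ENNReal.ofReal (c ^ 2) := ofReal_sq_mono (opNorm_nonneg _) hb
        _ ≤ _ := by
            rcases max_cases (opNorm (Υ₁ x)) (opNorm (Υ₂ x)) with ⟨hm, _⟩ | ⟨hm, _⟩ <;>
              rw [hc, hm]
            · exact le_sup_of_le_left (le_sup_of_le_left
                (le_iSup (fun x => ENNReal.ofReal (opNorm (Υ₁ x) ^ 2)) x))
            · exact le_sup_of_le_right (le_sup_of_le_left
                (le_iSup (fun x => ENNReal.ofReal (opNorm (Υ₂ x) ^ 2)) x))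
    · apply iSup_le
      intro y
      set c := max (opNorm (Φ₁ y)) (opNorm (Φ₂ y)) with hc
      have hc0 : 0 ≤ c := le_trans (opNorm_nonneg (Φ₁ y)) (le_max_left _ _)
      have hb : opNorm (Φ y) ≤ c := by
        apply opNorm_le_bound _ hc0
        intro u
        refine sq_le_helper (by positivity) ?_ (norm_nonneg _)
        have b1 : ‖(Φ₁ y ∘ₗ fstL) u‖ ≤ c * ‖u.fst‖ :=
          le_trans (le_opNorm (Φ₁ y) u.fst)
            (mul_le_mul_of_nonneg_right (le_max_left _ _) (norm_nonneg _))
        have b2 : ‖(Φ₂ y ∘ₗ sndL) u‖ ≤ c * ‖u.snd‖ :=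
          le_trans (le_opNorm (Φ₂ y) u.snd)
            (mul_le_mul_of_nonneg_right (le_max_right _ _) (norm_nonneg _))
        have s1 : ‖(Φ₁ y ∘ₗ fstL) u‖ ^ 2 ≤ c ^ 2 * ‖u.fst‖ ^ 2 := by
          rw [← mul_pow]; exact pow_le_pow_left₀ (norm_nonneg _) b1 2
        have s2 : ‖(Φ₂ y ∘ₗ sndL) u‖ ^ 2 ≤ c ^ 2 * ‖u.snd‖ ^ 2 := by
          rw [← mul_pow]; exact pow_le_pow_left₀ (norm_nonneg _) b2 2
        rw [hΦ, stack_norm_sq, mul_pow, WithLp.prod_norm_sq_eq_of_L2, mul_add]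
        exact add_le_add s1 s2
      calc ENNReal.ofReal (opNorm (Φ y) ^ 2)
          ≤ ENNReal.ofReal (c ^ 2) := ofReal_sq_mono (opNorm_nonneg _) hb
        _ ≤ _ := by
            rcases max_cases (opNorm (Φ₁ y)) (opNorm (Φ₂ y)) with ⟨hm, _⟩ | ⟨hm, _⟩ <;>
              rw [hc, hm]
            · exact le_sup_of_le_left (le_sup_of_le_right
                (le_iSup (fun y => ENNReal.ofReal (opNorm (Φ₁ y) ^ 2)) y))
            · exact le_sup_of_le_right (le_sup_of_le_right
                (le_iSup (fun y => ENNReal.ofReal (opNorm (Φ₂ y) ^ 2)) y))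

lemma part_i {D : Type} [Fintype D] {X Z Z' : Type}
    [NormedAddCommGroup X] [InnerProductSpace ℂ X] [FiniteDimensional ℂ X]
    [NormedAddCommGroup Z] [InnerProductSpace ℂ Z] [FiniteDimensional ℂ Z]
    [NormedAddCommGroup Z'] [InnerProductSpace ℂ Z'] [FiniteDimensional ℂ Z']
    (Δ : D → D → (X →ₗ[ℂ] X)) (V : D → (Z →ₗ[ℂ] Z)) (W : D → (Z' →ₗ[ℂ] Z')) :
    relGamma2 (fun x y => dsum (V x) (W x) - dsum (V y) (W y)) Δ =
      max (relGamma2 (fun x y => V x - V y) Δ) (relGamma2 (fun x y => W x - W y) Δ) := by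
  apply le_antisymm
  · set a := relGamma2 (fun x y => V x - V y) Δ with hA
    set b := relGamma2 (fun x y => W x - W y) Δ with hB
    apply ENNReal.le_of_forall_pos_le_add
    intro ε hε htop
    have ha : a ≠ ⊤ := ne_top_of_le_ne_top htop.ne (le_max_left _ _)
    have hb : b ≠ ⊤ := ne_top_of_le_ne_top htop.ne (le_max_right _ _)
    have hεne : (ε : ℝ≥0∞) ≠ 0 := ENNReal.coe_ne_zero.mpr hε.ne'
    have h1 : a < a + ε := ENNReal.lt_add_right ha hεne
    have h2 : b < b + ε := ENNReal.lt_add_right hb hεne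
    obtain ⟨k₁, Υ₁, Φ₁, hf₁, hb₁⟩ := relGamma2_lt_elim (hA ▸ h1)
    obtain ⟨k₂, Υ₂, Φ₂, hf₂, hb₂⟩ := relGamma2_lt_elim (hB ▸ h2)
    refine le_trans (dsum_upper_step Δ V W Υ₁ Φ₁ Υ₂ Φ₂ hf₁ hf₂) ?_
    refine sup_le (le_trans hb₁.le ?_) (le_trans hb₂.le ?_)
    · exact add_le_add_left (le_max_left _ _) _
    · exact add_le_add_left (le_max_right _ _) _
  · exact max_le (dsum_lower Δ V W) (dsum_lower' Δ V W)

section contraction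

variable {Y Y' ZW : Type*}
    [NormedAddCommGroup Y] [InnerProductSpace ℂ Y] [FiniteDimensional ℂ Y]
    [NormedAddCommGroup Y'] [InnerProductSpace ℂ Y'] [FiniteDimensional ℂ Y']
    [NormedAddCommGroup ZW] [InnerProductSpace ℂ ZW] [FiniteDimensional ℂ ZW]

/-- Contraction against a fixed vector in the second tensor factor. -/
noncomputable def contr (s : Y →ₗ[ℂ] Y' →ₗ[ℂ] ZW) (g : Y') : ZW →ₗ[ℂ] Y :=
  LinearMap.adjoint (s.flip g)

lemma contr_apply_t (s : Y →ₗ[ℂ] Y' →ₗ[ℂ] ZW)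
    (hs : ∀ (a c : Y) (b d : Y'), ⟪s a b, s c d⟫_ℂ = ⟪a, c⟫_ℂ * ⟪b, d⟫_ℂ)
    (g : Y') (a : Y) (b : Y') : contr s g (s a b) = ⟪g, b⟫_ℂ • a := by
  apply ext_inner_right ℂ
  intro z
  rw [contr, LinearMap.adjoint_inner_left, LinearMap.flip_apply, hs, inner_smul_left,
    inner_conj_symm]
  ring

lemma sum_flip_contr (s : Y →ₗ[ℂ] Y' →ₗ[ℂ] ZW)
    (hs : ∀ (a c : Y) (b d : Y'), ⟪s a b, s c d⟫_ℂ = ⟪a, c⟫_ℂ * ⟪b, d⟫_ℂ)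
    (hspan : Submodule.span ℂ (Set.range fun p : Y × Y' => s p.1 p.2) = ⊤)
    {n : ℕ} (g : Fin n → Y') (hg : ∀ z, ∑ j, (⟪g j, z⟫_ℂ) • g j = z) (u : ZW) :
    ∑ j, s.flip (g j) (contr s (g j) u) = u := by
  have hu : u ∈ Submodule.span ℂ (Set.range fun p : Y × Y' => s p.1 p.2) := by
    rw [hspan]; trivial
  induction hu using Submodule.span_induction with
  | mem u hu =>
      obtain ⟨⟨a, b⟩, rfl⟩ := hu
      calc ∑ j, s.flip (g j) (contr s (g j) (s a b))
          = ∑ j, s a ((⟪g j, b⟫_ℂ) • g j) := by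
            refine Finset.sum_congr rfl fun j _ => ?_
            rw [contr_apply_t s hs, map_smul, LinearMap.flip_apply, map_smul]
        _ = s a b := by rw [← map_sum, hg b]
  | zero => simp
  | add u v hu hv ihu ihv => simp only [map_add, Finset.sum_add_distrib, ihu, ihv]
  | smul c u hu ih => simp only [map_smul, ← Finset.smul_sum, ih]

lemma contr_energy (s : Y →ₗ[ℂ] Y' →ₗ[ℂ] ZW)
    (hs : ∀ (a c : Y) (b d : Y'), ⟪s a b, s c d⟫_ℂ = ⟪a, c⟫_ℂ * ⟪b, d⟫_ℂ)
    (hspan : Submodule.span ℂ (Set.range fun p : Y × Y' => s p.1 p.2) = ⊤)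
    {n : ℕ} (g : Fin n → Y') (hg : ∀ z, ∑ j, (⟪g j, z⟫_ℂ) • g j = z) (u : ZW) :
    ∑ j, ‖contr s (g j) u‖ ^ 2 = ‖u‖ ^ 2 := by
  have key : ∑ j, ⟪contr s (g j) u, contr s (g j) u⟫_ℂ = ⟪u, u⟫_ℂ :=
    calc ∑ j, ⟪contr s (g j) u, contr s (g j) u⟫_ℂ
        = ∑ j, ⟪u, s.flip (g j) (contr s (g j) u)⟫_ℂ := by
          refine Finset.sum_congr rfl fun j _ => ?_
          rw [contr, LinearMap.adjoint_inner_left]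
      _ = ⟪u, ∑ j, s.flip (g j) (contr s (g j) u)⟫_ℂ := (inner_sum _ _ _).symm
      _ = ⟪u, u⟫_ℂ := by rw [sum_flip_contr s hs hspan g hg u]
  calc ∑ j, ‖contr s (g j) u‖ ^ 2
      = ∑ j, RCLike.re (⟪contr s (g j) u, contr s (g j) u⟫_ℂ) := by
        simp [inner_self_eq_norm_sq, ← Complex.ofReal_pow]
    _ = RCLike.re (∑ j, ⟪contr s (g j) u, contr s (g j) u⟫_ℂ) := by rw [map_sum]
    _ = RCLike.re (⟪u, u⟫_ℂ) := by rw [key]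
    _ = ‖u‖ ^ 2 := inner_self_eq_norm_sq u

end contraction

section piLift

variable {ZW X Y Y' : Type*}
    [NormedAddCommGroup ZW] [InnerProductSpace ℂ ZW]
    [NormedAddCommGroup X] [InnerProductSpace ℂ X]
    [NormedAddCommGroup Y] [InnerProductSpace ℂ Y]
    [NormedAddCommGroup Y'] [InnerProductSpace ℂ Y']

/-- Lift a `PiLp`-valued map along a family of contractions. -/
noncomputable def piLift {ι κ : Type*} (F : Y →ₗ[ℂ] PiLp 2 (fun _ : ι => X))
    (C : κ → (ZW →ₗ[ℂ] Y)) : ZW →ₗ[ℂ] PiLp 2 (fun _ : ι × κ => X) where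
  toFun u := WithLp.toLp 2 (fun p : ι × κ => F (C p.2 u) p.1)
  map_add' u v := by ext p; simp
  map_smul' c u := by ext p; simp

@[simp] lemma piLift_apply {ι κ : Type*} (F : Y →ₗ[ℂ] PiLp 2 (fun _ : ι => X))
    (C : κ → (ZW →ₗ[ℂ] Y)) (u : ZW) (p : ι × κ) :
    piLift F C u p = F (C p.2 u) p.1 := rfl

lemma piLift_inner {ι κ : Type*} [Fintype ι] [Fintype κ] {X' : Type*}
    [NormedAddCommGroup X'] [InnerProductSpace ℂ X'] (δ : X' →ₗ[ℂ] X)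
    (F : Y →ₗ[ℂ] PiLp 2 (fun _ : ι => X)) (C : κ → (ZW →ₗ[ℂ] Y))
    (G : Y' →ₗ[ℂ] PiLp 2 (fun _ : ι => X')) (C' : κ → (ZW →ₗ[ℂ] Y'))
    (w v : ZW) :
    ⟪piLift F C w, piBlock (fun _ : ι × κ => δ) (piLift G C' v)⟫_ℂ =
      ∑ j : κ, ⟪F (C j w), piBlock (fun _ : ι => δ) (G (C' j v))⟫_ℂ := by
  simp only [PiLp.inner_apply, piBlock_apply, piLift_apply]
  rw [Fintype.sum_prod_type]
  rw [Finset.sum_comm]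

lemma piLift_norm_sq {ι κ : Type*} [Fintype ι] [Fintype κ]
    (F : Y →ₗ[ℂ] PiLp 2 (fun _ : ι => X)) (C : κ → (ZW →ₗ[ℂ] Y)) (u : ZW) :
    ‖piLift F C u‖ ^ 2 = ∑ j : κ, ‖F (C j u)‖ ^ 2 := by
  rw [PiLp.norm_sq_eq_of_L2, Fintype.sum_prod_type, Finset.sum_comm]
  refine Finset.sum_congr rfl fun j _ => ?_
  rw [PiLp.norm_sq_eq_of_L2]
  rfl

end piLift

lemma unitary_expansion {Y : Type*} [NormedAddCommGroup Y] [InnerProductSpace ℂ Y]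
    [FiniteDimensional ℂ Y] (U : Y →ₗ[ℂ] Y)
    (hU : U ∘ₗ LinearMap.adjoint U = LinearMap.id)
    {n : ℕ} (b : OrthonormalBasis (Fin n) ℂ Y) (z : Y) :
    ∑ j, (⟪U (b j), z⟫_ℂ) • U (b j) = z := by
  calc ∑ j, (⟪U (b j), z⟫_ℂ) • U (b j)
      = U (∑ j, (⟪b j, LinearMap.adjoint U z⟫_ℂ) • b j) := by
        rw [map_sum]
        refine Finset.sum_congr rfl fun j _ => ?_
        rw [map_smul, LinearMap.adjoint_inner_right]
    _ = U (LinearMap.adjoint U z) := by rw [b.sum_repr']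
    _ = z := LinearMap.ext_iff.mp hU z

section tensor

variable {D : Type} [Fintype D] {X Z Z' ZW : Type}
    [NormedAddCommGroup X] [InnerProductSpace ℂ X] [FiniteDimensional ℂ X]
    [NormedAddCommGroup Z] [InnerProductSpace ℂ Z] [FiniteDimensional ℂ Z]
    [NormedAddCommGroup Z'] [InnerProductSpace ℂ Z'] [FiniteDimensional ℂ Z']
    [NormedAddCommGroup ZW] [InnerProductSpace ℂ ZW] [FiniteDimensional ℂ ZW]

lemma flip_inner_t (TS : TensorStructure Z Z' ZW) :
    ∀ (b d : Z') (a c : Z), ⟪TS.t.flip b a, TS.t.flip d c⟫_ℂ = ⟪b, d⟫_ℂ * ⟪a, c⟫_ℂ := by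
  intro b d a c
  rw [LinearMap.flip_apply, LinearMap.flip_apply, TS.inner_t, mul_comm]

lemma flip_span_t (TS : TensorStructure Z Z' ZW) :
    Submodule.span ℂ (Set.range fun p : Z' × Z => TS.t.flip p.1 p.2) = ⊤ := by
  have hrange : (Set.range fun p : Z' × Z => TS.t.flip p.1 p.2) =
      (Set.range fun p : Z × Z' => TS.t p.1 p.2) := by
    ext u
    constructor
    · rintro ⟨⟨b, a⟩, rfl⟩; exact ⟨(a, b), rfl⟩
    · rintro ⟨⟨a, b⟩, rfl⟩; exact ⟨(b, a), rfl⟩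
  rw [hrange]; exact TS.span_t

lemma tensor_core
    (V : D → (Z →ₗ[ℂ] Z)) (W : D → (Z' →ₗ[ℂ] Z'))
    (TS : TensorStructure Z Z' ZW)
    (VW : D → (ZW →ₗ[ℂ] ZW))
    (hVW : ∀ x a b, VW x (TS.t a b) = TS.t (V x a) (W x b))
    (e : OrthonormalBasis (Fin (Module.finrank ℂ Z')) ℂ Z')
    (f : OrthonormalBasis (Fin (Module.finrank ℂ Z)) ℂ Z)
    (x y : D) (v : ZW) :
    (∑ j, TS.t.flip (W x (e j)) ((V x - V y) (contr TS.t (e j) v))) +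
      (∑ j, TS.t (f j) ((W x - W y)
        (contr TS.t.flip (LinearMap.adjoint (V y) (f j)) v))) =
    VW x v - VW y v := by
  have hu : v ∈ Submodule.span ℂ (Set.range fun p : Z × Z' => TS.t p.1 p.2) := by
    rw [TS.span_t]; trivial
  induction hu using Submodule.span_induction with
  | mem v hv' =>
      obtain ⟨⟨a, b⟩, rfl⟩ := hv'
      have first : (∑ j, TS.t.flip (W x (e j)) ((V x - V y) (contr TS.t (e j) (TS.t a b))))
          = TS.t ((V x - V y) a) (W x b) := by
        calc ∑ j, TS.t.flip (W x (e j)) ((V x - V y) (contr TS.t (e j) (TS.t a b)))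
            = ∑ j, TS.t ((V x - V y) a) (W x ((⟪e j, b⟫_ℂ) • e j)) := by
              refine Finset.sum_congr rfl fun j _ => ?_
              rw [contr_apply_t TS.t TS.inner_t]
              simp [LinearMap.flip_apply]
          _ = TS.t ((V x - V y) a) (W x b) := by
              rw [← map_sum, ← map_sum, e.sum_repr']
      have second : (∑ j, TS.t (f j) ((W x - W y)
            (contr TS.t.flip (LinearMap.adjoint (V y) (f j)) (TS.t a b))))
          = TS.t (V y a) ((W x - W y) b) := by
        calc ∑ j, TS.t (f j) ((W x - W y)
              (contr TS.t.flip (LinearMap.adjoint (V y) (f j)) (TS.t a b)))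
            = ∑ j, (⟪f j, V y a⟫_ℂ) • TS.t (f j) ((W x - W y) b) := by
              refine Finset.sum_congr rfl fun j _ => ?_
              rw [show TS.t a b = TS.t.flip b a from rfl,
                contr_apply_t TS.t.flip (flip_inner_t TS), map_smul, map_smul,
                LinearMap.adjoint_inner_left]
          _ = (∑ j, TS.t ((⟪f j, V y a⟫_ℂ) • f j)) ((W x - W y) b) := by
              rw [LinearMap.sum_apply]
              refine Finset.sum_congr rfl fun j _ => ?_
              rw [map_smul, LinearMap.smul_apply]
          _ = TS.t (V y a) ((W x - W y) b) := by
              rw [← map_sum, f.sum_repr']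
      rw [first, second, hVW, hVW]
      simp only [LinearMap.sub_apply, map_sub]
      abel
  | zero => simp
  | add u v hu hv ihu ihv =>
      simp only [map_add, Finset.sum_add_distrib]
      have key : ∀ a₁ a₂ b₁ b₂ c₁ c₂ d₁ d₂ : ZW, a₁ + b₁ = c₁ - d₁ → a₂ + b₂ = c₂ - d₂ →
          a₁ + a₂ + (b₁ + b₂) = c₁ + c₂ - (d₁ + d₂) := by
        intro a₁ a₂ b₁ b₂ c₁ c₂ d₁ d₂ h1 h2
        rw [show a₁ + a₂ + (b₁ + b₂) = (a₁ + b₁) + (a₂ + b₂) by abel, h1, h2]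
        abel
      exact key _ _ _ _ _ _ _ _ ihu ihv
  | smul c u hu ih =>
      simp only [map_smul, ← Finset.smul_sum]
      rw [← smul_add, ih, smul_sub]

lemma tensor_upper_step
    (Δ : D → D → (X →ₗ[ℂ] X))
    (V : D → (Z →ₗ[ℂ] Z)) (hV : ∀ x, IsUnitaryMap (V x))
    (W : D → (Z' →ₗ[ℂ] Z')) (hW : ∀ x, IsUnitaryMap (W x))
    (TS : TensorStructure Z Z' ZW) (VW : D → (ZW →ₗ[ℂ] ZW))
    (hVW : ∀ x a b, VW x (TS.t a b) = TS.t (V x a) (W x b))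
    {k₁ k₂ : ℕ}
    (Υ₁ Φ₁ : D → (Z →ₗ[ℂ] PiLp 2 (fun _ : Fin k₁ => X)))
    (Υ₂ Φ₂ : D → (Z' →ₗ[ℂ] PiLp 2 (fun _ : Fin k₂ => X)))
    (h₁ : ∀ x y, V x - V y =
      LinearMap.adjoint (Υ₁ x) ∘ₗ piBlock (fun _ : Fin k₁ => Δ x y) ∘ₗ Φ₁ y)
    (h₂ : ∀ x y, W x - W y =
      LinearMap.adjoint (Υ₂ x) ∘ₗ piBlock (fun _ : Fin k₂ => Δ x y) ∘ₗ Φ₂ y) :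
    relGamma2 (fun x y => VW x - VW y) Δ ≤
      ((⨆ x, ENNReal.ofReal (opNorm (Υ₁ x) ^ 2)) ⊔
        (⨆ y, ENNReal.ofReal (opNorm (Φ₁ y) ^ 2))) +
      ((⨆ x, ENNReal.ofReal (opNorm (Υ₂ x) ^ 2)) ⊔
        (⨆ y, ENNReal.ofReal (opNorm (Φ₂ y) ^ 2))) := by
  classical
  set e : OrthonormalBasis (Fin (Module.finrank ℂ Z')) ℂ Z' := stdOrthonormalBasis ℂ Z'
  set f : OrthonormalBasis (Fin (Module.finrank ℂ Z)) ℂ Z := stdOrthonormalBasis ℂ Z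
  have hgW : ∀ x z, ∑ j, (⟪W x (e j), z⟫_ℂ) • W x (e j) = z :=
    fun x => unitary_expansion (W x) (hW x).2 e
  have hgVy : ∀ y z, ∑ j, (⟪LinearMap.adjoint (V y) (f j), z⟫_ℂ) •
      LinearMap.adjoint (V y) (f j) = z := fun y =>
    unitary_expansion (LinearMap.adjoint (V y))
      (by rw [LinearMap.adjoint_adjoint]; exact (hV y).1) f
  set Υ' : D → (ZW →ₗ[ℂ] PiLp 2
      (fun _ : (Fin k₁ × Fin (Module.finrank ℂ Z')) ⊕
        (Fin k₂ × Fin (Module.finrank ℂ Z)) => X)) :=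
    fun x => stack (piLift (Υ₁ x) (fun j => contr TS.t (W x (e j))))
      (piLift (Υ₂ x) (fun j => contr TS.t.flip (f j))) with hΥ'
  set Φ' : D → (ZW →ₗ[ℂ] PiLp 2
      (fun _ : (Fin k₁ × Fin (Module.finrank ℂ Z')) ⊕
        (Fin k₂ × Fin (Module.finrank ℂ Z)) => X)) :=
    fun y => stack (piLift (Φ₁ y) (fun j => contr TS.t (e j)))
      (piLift (Φ₂ y) (fun j => contr TS.t.flip (LinearMap.adjoint (V y) (f j)))) with hΦ'
  refine le_trans (relGamma2_le_general _ _ Υ' Φ' ?_) ?_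
  · intro x y
    rw [factor_iff]
    intro w v
    rw [hΥ', hΦ', stack_inner, piLift_inner, piLift_inner]
    have e₁ : ∀ j, (⟪(Υ₁ x) (contr TS.t (W x (e j)) w),
          piBlock (fun _ : Fin k₁ => Δ x y) ((Φ₁ y) (contr TS.t (e j) v))⟫_ℂ)
        = ⟪w, TS.t.flip (W x (e j)) ((V x - V y) (contr TS.t (e j) v))⟫_ℂ := by
      intro j
      rw [← (factor_iff _ _ _ _).mp (h₁ x y)]
      simp only [contr]
      rw [LinearMap.adjoint_inner_left]
    have e₂ : ∀ j, (⟪(Υ₂ x) (contr TS.t.flip (f j) w),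
          piBlock (fun _ : Fin k₂ => Δ x y)
            ((Φ₂ y) (contr TS.t.flip (LinearMap.adjoint (V y) (f j)) v))⟫_ℂ)
        = ⟪w, TS.t (f j) ((W x - W y)
            (contr TS.t.flip (LinearMap.adjoint (V y) (f j)) v))⟫_ℂ := by
      intro j
      rw [← (factor_iff _ _ _ _).mp (h₂ x y)]
      simp only [contr]
      rw [LinearMap.adjoint_inner_left]
      rfl
    rw [Finset.sum_congr rfl fun j _ => e₁ j, Finset.sum_congr rfl fun j _ => e₂ j,
      ← inner_sum, ← inner_sum, ← inner_add_right,
      tensor_core V W TS VW hVW e f x y v, LinearMap.sub_apply]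
  · apply sup_le
    · apply iSup_le
      intro x
      set o₁ := opNorm (Υ₁ x)
      set o₂ := opNorm (Υ₂ x)
      have hsq : ∀ u : ZW, ‖Υ' x u‖ ^ 2 ≤ (o₁ ^ 2 + o₂ ^ 2) * ‖u‖ ^ 2 := by
        intro u
        rw [hΥ', stack_norm_sq, piLift_norm_sq, piLift_norm_sq]
        have b₁ : ∑ j, ‖(Υ₁ x) (contr TS.t (W x (e j)) u)‖ ^ 2 ≤ o₁ ^ 2 * ‖u‖ ^ 2 := by
          calc ∑ j, ‖(Υ₁ x) (contr TS.t (W x (e j)) u)‖ ^ 2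
              ≤ ∑ j, o₁ ^ 2 * ‖contr TS.t (W x (e j)) u‖ ^ 2 := by
                refine Finset.sum_le_sum fun j _ => ?_
                rw [← mul_pow]
                exact pow_le_pow_left₀ (norm_nonneg _) (le_opNorm _ _) 2
            _ = o₁ ^ 2 * ‖u‖ ^ 2 := by
                rw [← Finset.mul_sum,
                  contr_energy TS.t TS.inner_t TS.span_t _ (hgW x) u]
        have b₂ : ∑ j, ‖(Υ₂ x) (contr TS.t.flip (f j) u)‖ ^ 2 ≤ o₂ ^ 2 * ‖u‖ ^ 2 := by
          calc ∑ j, ‖(Υ₂ x) (contr TS.t.flip (f j) u)‖ ^ 2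
              ≤ ∑ j, o₂ ^ 2 * ‖contr TS.t.flip (f j) u‖ ^ 2 := by
                refine Finset.sum_le_sum fun j _ => ?_
                rw [← mul_pow]
                exact pow_le_pow_left₀ (norm_nonneg _) (le_opNorm _ _) 2
            _ = o₂ ^ 2 * ‖u‖ ^ 2 := by
                rw [← Finset.mul_sum,
                  contr_energy TS.t.flip (flip_inner_t TS) (flip_span_t TS) _
                    f.sum_repr' u]
        calc ∑ j, ‖(Υ₁ x) (contr TS.t (W x (e j)) u)‖ ^ 2 +
              ∑ j, ‖(Υ₂ x) (contr TS.t.flip (f j) u)‖ ^ 2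
            ≤ o₁ ^ 2 * ‖u‖ ^ 2 + o₂ ^ 2 * ‖u‖ ^ 2 := add_le_add b₁ b₂
          _ = (o₁ ^ 2 + o₂ ^ 2) * ‖u‖ ^ 2 := by ring
      have hM : opNorm (Υ' x) ≤ Real.sqrt (o₁ ^ 2 + o₂ ^ 2) := by
        apply opNorm_le_bound _ (Real.sqrt_nonneg _)
        intro u
        refine sq_le_helper (by positivity) ?_ (norm_nonneg _)
        rw [mul_pow, Real.sq_sqrt (by positivity)]
        exact hsq u
      calc ENNReal.ofReal (opNorm (Υ' x) ^ 2)
          ≤ ENNReal.ofReal (Real.sqrt (o₁ ^ 2 + o₂ ^ 2) ^ 2) :=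
            ofReal_sq_mono (opNorm_nonneg _) hM
        _ = ENNReal.ofReal (o₁ ^ 2 + o₂ ^ 2) := by
            rw [Real.sq_sqrt (by positivity)]
        _ = ENNReal.ofReal (o₁ ^ 2) + ENNReal.ofReal (o₂ ^ 2) :=
            ENNReal.ofReal_add (by positivity) (by positivity)
        _ ≤ _ := add_le_add
            (le_trans (le_iSup (fun x => ENNReal.ofReal (opNorm (Υ₁ x) ^ 2)) x)
              le_sup_left)
            (le_trans (le_iSup (fun x => ENNReal.ofReal (opNorm (Υ₂ x) ^ 2)) x)
              le_sup_left)
    · apply iSup_le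
      intro y
      set o₁ := opNorm (Φ₁ y)
      set o₂ := opNorm (Φ₂ y)
      have hsq : ∀ u : ZW, ‖Φ' y u‖ ^ 2 ≤ (o₁ ^ 2 + o₂ ^ 2) * ‖u‖ ^ 2 := by
        intro u
        rw [hΦ', stack_norm_sq, piLift_norm_sq, piLift_norm_sq]
        have b₁ : ∑ j, ‖(Φ₁ y) (contr TS.t (e j) u)‖ ^ 2 ≤ o₁ ^ 2 * ‖u‖ ^ 2 := by
          calc ∑ j, ‖(Φ₁ y) (contr TS.t (e j) u)‖ ^ 2
              ≤ ∑ j, o₁ ^ 2 * ‖contr TS.t (e j) u‖ ^ 2 := by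
                refine Finset.sum_le_sum fun j _ => ?_
                rw [← mul_pow]
                exact pow_le_pow_left₀ (norm_nonneg _) (le_opNorm _ _) 2
            _ = o₁ ^ 2 * ‖u‖ ^ 2 := by
                rw [← Finset.mul_sum,
                  contr_energy TS.t TS.inner_t TS.span_t _ e.sum_repr' u]
        have b₂ : ∑ j, ‖(Φ₂ y) (contr TS.t.flip (LinearMap.adjoint (V y) (f j)) u)‖ ^ 2
            ≤ o₂ ^ 2 * ‖u‖ ^ 2 := by
          calc ∑ j, ‖(Φ₂ y) (contr TS.t.flip (LinearMap.adjoint (V y) (f j)) u)‖ ^ 2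
              ≤ ∑ j, o₂ ^ 2 * ‖contr TS.t.flip (LinearMap.adjoint (V y) (f j)) u‖ ^ 2 := by
                refine Finset.sum_le_sum fun j _ => ?_
                rw [← mul_pow]
                exact pow_le_pow_left₀ (norm_nonneg _) (le_opNorm _ _) 2
            _ = o₂ ^ 2 * ‖u‖ ^ 2 := by
                rw [← Finset.mul_sum,
                  contr_energy TS.t.flip (flip_inner_t TS) (flip_span_t TS) _
                    (hgVy y) u]
        calc ∑ j, ‖(Φ₁ y) (contr TS.t (e j) u)‖ ^ 2 +
              ∑ j, ‖(Φ₂ y) (contr TS.t.flip (LinearMap.adjoint (V y) (f j)) u)‖ ^ 2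
            ≤ o₁ ^ 2 * ‖u‖ ^ 2 + o₂ ^ 2 * ‖u‖ ^ 2 := add_le_add b₁ b₂
          _ = (o₁ ^ 2 + o₂ ^ 2) * ‖u‖ ^ 2 := by ring
      have hM : opNorm (Φ' y) ≤ Real.sqrt (o₁ ^ 2 + o₂ ^ 2) := by
        apply opNorm_le_bound _ (Real.sqrt_nonneg _)
        intro u
        refine sq_le_helper (by positivity) ?_ (norm_nonneg _)
        rw [mul_pow, Real.sq_sqrt (by positivity)]
        exact hsq u
      calc ENNReal.ofReal (opNorm (Φ' y) ^ 2)
          ≤ ENNReal.ofReal (Real.sqrt (o₁ ^ 2 + o₂ ^ 2) ^ 2) :=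
            ofReal_sq_mono (opNorm_nonneg _) hM
        _ = ENNReal.ofReal (o₁ ^ 2 + o₂ ^ 2) := by
            rw [Real.sq_sqrt (by positivity)]
        _ = ENNReal.ofReal (o₁ ^ 2) + ENNReal.ofReal (o₂ ^ 2) :=
            ENNReal.ofReal_add (by positivity) (by positivity)
        _ ≤ _ := add_le_add
            (le_trans (le_iSup (fun y => ENNReal.ofReal (opNorm (Φ₁ y) ^ 2)) y)
              le_sup_right)
            (le_trans (le_iSup (fun y => ENNReal.ofReal (opNorm (Φ₂ y) ^ 2)) y)
              le_sup_right)

end tensor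

lemma part_ii {D : Type} [Fintype D] {X Z Z' ZW : Type}
    [NormedAddCommGroup X] [InnerProductSpace ℂ X] [FiniteDimensional ℂ X]
    [NormedAddCommGroup Z] [InnerProductSpace ℂ Z] [FiniteDimensional ℂ Z]
    [NormedAddCommGroup Z'] [InnerProductSpace ℂ Z'] [FiniteDimensional ℂ Z']
    [NormedAddCommGroup ZW] [InnerProductSpace ℂ ZW] [FiniteDimensional ℂ ZW]
    (Δ : D → D → (X →ₗ[ℂ] X))
    (V : D → (Z →ₗ[ℂ] Z)) (hV : ∀ x, IsUnitaryMap (V x))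
    (W : D → (Z' →ₗ[ℂ] Z')) (hW : ∀ x, IsUnitaryMap (W x))
    (TS : TensorStructure Z Z' ZW) (VW : D → (ZW →ₗ[ℂ] ZW))
    (hVW : ∀ x a b, VW x (TS.t a b) = TS.t (V x a) (W x b))
    (hVfin : relGamma2 (fun x y => V x - V y) Δ ≠ ⊤)
    (hWfin : relGamma2 (fun x y => W x - W y) Δ ≠ ⊤) :
    relGamma2 (fun x y => VW x - VW y) Δ ≤
      relGamma2 (fun x y => V x - V y) Δ + relGamma2 (fun x y => W x - W y) Δ := by
  apply ENNReal.le_of_forall_pos_le_add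
  intro ε hε _
  set δ : ℝ≥0∞ := (ε : ℝ≥0∞) / 2 with hδdef
  have hδ : δ ≠ 0 := by
    refine (ENNReal.div_pos ?_ ?_).ne'
    · exact_mod_cast hε.ne'
    · norm_num
  have h1 : relGamma2 (fun x y => V x - V y) Δ <
      relGamma2 (fun x y => V x - V y) Δ + δ := ENNReal.lt_add_right hVfin hδ
  have h2 : relGamma2 (fun x y => W x - W y) Δ <
      relGamma2 (fun x y => W x - W y) Δ + δ := ENNReal.lt_add_right hWfin hδ
  obtain ⟨k₁, Υ₁, Φ₁, hf₁, hb₁⟩ := relGamma2_lt_elim h1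
  obtain ⟨k₂, Υ₂, Φ₂, hf₂, hb₂⟩ := relGamma2_lt_elim h2
  refine le_trans (tensor_upper_step Δ V hV W hW TS VW hVW Υ₁ Φ₁ Υ₂ Φ₂ hf₁ hf₂) ?_
  calc ((⨆ x, ENNReal.ofReal (opNorm (Υ₁ x) ^ 2)) ⊔
        (⨆ y, ENNReal.ofReal (opNorm (Φ₁ y) ^ 2))) +
      ((⨆ x, ENNReal.ofReal (opNorm (Υ₂ x) ^ 2)) ⊔
        (⨆ y, ENNReal.ofReal (opNorm (Φ₂ y) ^ 2)))
      ≤ (relGamma2 (fun x y => V x - V y) Δ + δ) +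
          (relGamma2 (fun x y => W x - W y) Δ + δ) := add_le_add hb₁.le hb₂.le
    _ = relGamma2 (fun x y => V x - V y) Δ + relGamma2 (fun x y => W x - W y) Δ +
          (δ + δ) := by ring
    _ = relGamma2 (fun x y => V x - V y) Δ + relGamma2 (fun x y => W x - W y) Δ + ε := by
        rw [hδdef, ENNReal.add_halves]

/-- Adversary bound for direct sums and tensor products of unitary
implementations: (i) `γ₂(V_x ⊕ W_x − V_y ⊕ W_y | O_x − O_y)
= max(γ₂(V_x − V_y | O_x − O_y), γ₂(W_x − W_y | O_x − O_y))`; and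
(ii) if both are finite, `γ₂(V_x ⊗ W_x − V_y ⊗ W_y | O_x − O_y)
≤ γ₂(V_x − V_y | O_x − O_y) + γ₂(W_x − W_y | O_x − O_y)`,
where `VW_x = V_x ⊗ W_x` with respect to a realization of the tensor product `Z ⊗ Z'`. -/
theorem statement12 {D : Type} [Fintype D] {X Z Z' ZW : Type}
    [NormedAddCommGroup X] [InnerProductSpace ℂ X] [FiniteDimensional ℂ X]
    [NormedAddCommGroup Z] [InnerProductSpace ℂ Z] [FiniteDimensional ℂ Z]
    [NormedAddCommGroup Z'] [InnerProductSpace ℂ Z'] [FiniteDimensional ℂ Z']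
    [NormedAddCommGroup ZW] [InnerProductSpace ℂ ZW] [FiniteDimensional ℂ ZW]
    (O : D → (X →ₗ[ℂ] X)) (hO : ∀ x, IsUnitaryMap (O x))
    (V : D → (Z →ₗ[ℂ] Z)) (hV : ∀ x, IsUnitaryMap (V x))
    (W : D → (Z' →ₗ[ℂ] Z')) (hW : ∀ x, IsUnitaryMap (W x))
    (TS : TensorStructure Z Z' ZW)
    (VW : D → (ZW →ₗ[ℂ] ZW))
    (hVW : ∀ x a b, VW x (TS.t a b) = TS.t (V x a) (W x b)) :
    (relGamma2 (fun x y => dsum (V x) (W x) - dsum (V y) (W y))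
        (fun x y => O x - O y) =
      max (relGamma2 (fun x y => V x - V y) (fun x y => O x - O y))
        (relGamma2 (fun x y => W x - W y) (fun x y => O x - O y))) ∧
    (relGamma2 (fun x y => V x - V y) (fun x y => O x - O y) ≠ ⊤ →
      relGamma2 (fun x y => W x - W y) (fun x y => O x - O y) ≠ ⊤ →
      relGamma2 (fun x y => VW x - VW y) (fun x y => O x - O y) ≤
        relGamma2 (fun x y => V x - V y) (fun x y => O x - O y) +
          relGamma2 (fun x y => W x - W y) (fun x y => O x - O y)) := by
  constructor
  · exact part_i (fun x y => O x - O y) V W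
  · intro hVfin hWfin
    exact part_ii (fun x y => O x - O y) V hV W hW TS VW hVW hVfin hWfin

end
end

section
/- Upper bound for state conversion with state-generating oracles: let D be a finite set, n ∈ ℕ, X a finite-dimensional complex inner product space with a distinguished unit vector e₀, and Z a finite-dimensional complex inner product space. For each x ∈ D and j ∈ {1,…,n}, let O_{x,j} be a unitary on X, set ψ_{x,j} = O_{x,j} e₀, and let O_x = ⊕_{j=1}^n O_{x,j} be the block-diagonal unitary on ℂ^n ⊗ X. Let ρ_x, σ_x be unit vectors in Z. Then γ₂((⟨ρ_x,ρ_y⟩ − ⟨σ_x,σ_y⟩)_{x,y∈D} | (O_x − O_y)_{x,y∈D}) ≤ γ₂((⟨ρ_x,ρ_y⟩ − ⟨σ_x,σ_y⟩)_{x,y∈D} | (D_{xy})_{x,y∈D}), where D_{xy} is the n × n diagonal matrix (a linear map ℂ^n → ℂ^n) with j-th diagonal entry 1 − ⟨ψ_{x,j}, ψ_{y,j}⟩. -/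
noncomputable section

open scoped ENNReal ComplexOrder

namespace St14Aux

variable {ι : Type*} [Fintype ι] {X₀ X₁ X₂ : Type*}
    [NormedAddCommGroup X₀] [InnerProductSpace ℂ X₀]
    [NormedAddCommGroup X₁] [InnerProductSpace ℂ X₁]
    [NormedAddCommGroup X₂] [InnerProductSpace ℂ X₂]

lemma piBlock_apply (Δ : ι → (X₂ →ₗ[ℂ] X₁)) (z : PiLp 2 (fun _ : ι => X₂)) (i : ι) :
    piBlock Δ z i = Δ i (z i) := rfl

lemma piBlock_comp (f : ι → (X₁ →ₗ[ℂ] X₀)) (g : ι → (X₂ →ₗ[ℂ] X₁)) :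
    piBlock f ∘ₗ piBlock g = piBlock (fun i => f i ∘ₗ g i) := rfl

lemma piBlock_sub (f g : ι → (X₂ →ₗ[ℂ] X₁)) :
    piBlock f - piBlock g = piBlock (fun i => f i - g i) := rfl

lemma adjoint_piBlock [FiniteDimensional ℂ X₁] [FiniteDimensional ℂ X₂]
    (Δ : ι → (X₂ →ₗ[ℂ] X₁)) :
    LinearMap.adjoint (piBlock Δ) = piBlock (fun i => LinearMap.adjoint (Δ i)) := by
  symm
  rw [LinearMap.eq_adjoint_iff]
  intro z w
  simp [PiLp.inner_apply, piBlock_apply, LinearMap.adjoint_inner_left]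

lemma norm_piBlock (g : ι → (X₂ →ₗ[ℂ] X₁)) (hg : ∀ i v, ‖g i v‖ = ‖v‖)
    (z : PiLp 2 (fun _ : ι => X₂)) : ‖piBlock g z‖ = ‖z‖ := by
  have h1 : ‖piBlock g z‖ ^ 2 = ‖z‖ ^ 2 := by
    rw [PiLp.norm_sq_eq_of_L2, PiLp.norm_sq_eq_of_L2]
    exact Finset.sum_congr rfl fun i _ => by rw [piBlock_apply, hg]
  rw [← Real.sqrt_sq (norm_nonneg (piBlock g z)), ← Real.sqrt_sq (norm_nonneg z), h1]

lemma opNorm_comp_isometry {E F G : Type*} [NormedAddCommGroup E] [InnerProductSpace ℂ E]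
    [NormedAddCommGroup F] [InnerProductSpace ℂ F]
    [NormedAddCommGroup G] [InnerProductSpace ℂ G] [FiniteDimensional ℂ E]
    (T : F →ₗ[ℂ] G) (hT : ∀ v, ‖T v‖ = ‖v‖) (f : E →ₗ[ℂ] F) :
    opNorm (T ∘ₗ f) ≤ opNorm f := by
  refine ContinuousLinearMap.opNorm_le_bound _ (norm_nonneg _) fun z => ?_
  simp only [LinearMap.coe_toContinuousLinearMap', LinearMap.comp_apply]
  rw [hT]
  exact (LinearMap.toContinuousLinearMap f).le_opNorm z

def emb (v : X₁) : ℂ →ₗ[ℂ] X₁ := LinearMap.toSpanSingleton ℂ X₁ v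

lemma emb_norm (v : X₁) (hv : ‖v‖ = 1) (c : ℂ) : ‖emb v c‖ = ‖c‖ := by
  simp [emb, LinearMap.toSpanSingleton_apply, norm_smul, hv]

lemma adjoint_emb_apply [FiniteDimensional ℂ X₁] (v : X₁) (w : X₁) :
    LinearMap.adjoint (emb v) w = (inner ℂ v w : ℂ) := by
  have h := LinearMap.adjoint_inner_right (𝕜 := ℂ) (emb v) 1 w
  simpa [emb, LinearMap.toSpanSingleton_apply, inner] using h

lemma emb_conj [FiniteDimensional ℂ X₁] (v w : X₁) (f : X₁ →ₗ[ℂ] X₁) :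
    LinearMap.adjoint (emb v) ∘ₗ f ∘ₗ emb w = scalarMap (inner ℂ v (f w) : ℂ) := by
  refine LinearMap.ext_ring ?_
  simp only [LinearMap.comp_apply, adjoint_emb_apply, scalarMap, LinearMap.smul_apply,
    LinearMap.id_apply, smul_eq_mul, mul_one]
  simp [emb, LinearMap.toSpanSingleton_apply]

end St14Aux

open St14Aux

set_option maxHeartbeats 1000000

/-- Upper bound for state conversion with state-generating oracles:
for block-diagonal oracles `O_x = ⊕_j O_{x,j}` on `ℂⁿ ⊗ X` generating the states
`ψ_{x,j} = O_{x,j} e₀`, we have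
`γ₂(⟨ρ_x,ρ_y⟩ − ⟨σ_x,σ_y⟩ | O_x − O_y) ≤
 γ₂(⟨ρ_x,ρ_y⟩ − ⟨σ_x,σ_y⟩ | ⊕_j (1 − ⟨ψ_{x,j}, ψ_{y,j}⟩))`,
the latter relative to the `n × n` diagonal matrices with entries
`1 − ⟨ψ_{x,j}, ψ_{y,j}⟩`. -/
theorem statement14 {D : Type} [Fintype D] (n : ℕ) {X Z : Type}
    [NormedAddCommGroup X] [InnerProductSpace ℂ X] [FiniteDimensional ℂ X]
    [NormedAddCommGroup Z] [InnerProductSpace ℂ Z] [FiniteDimensional ℂ Z]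
    (e₀ : X) (he₀ : ‖e₀‖ = 1)
    (O : D → Fin n → (X →ₗ[ℂ] X)) (hO : ∀ x j, IsUnitaryMap (O x j))
    (ρ σ : D → Z) (hρ : ∀ x, ‖ρ x‖ = 1) (hσ : ∀ x, ‖σ x‖ = 1) :
    relGamma2
        (fun x y => scalarMap ((inner ℂ (ρ x) (ρ y) : ℂ) - (inner ℂ (σ x) (σ y) : ℂ)))
        (fun x y => piBlock (O x) - piBlock (O y)) ≤
      relGamma2
        (fun x y => scalarMap ((inner ℂ (ρ x) (ρ y) : ℂ) - (inner ℂ (σ x) (σ y) : ℂ)))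
        (fun x y =>
          piBlock (fun j => scalarMap (1 - (inner ℂ (O x j e₀) (O y j e₀) : ℂ)))) := by
  classical
  -- the generated states are unit vectors
  have hinner : ∀ x j, (inner ℂ (O x j e₀) (O x j e₀) : ℂ) = 1 := by
    intro x j
    have h1 : (inner ℂ (O x j e₀) (O x j e₀) : ℂ)
        = inner ℂ e₀ (LinearMap.adjoint (O x j) (O x j e₀)) :=
      (LinearMap.adjoint_inner_right _ _ _).symm
    rw [h1, ← LinearMap.comp_apply, (hO x j).1, LinearMap.id_apply,
      inner_self_eq_norm_sq_to_K, he₀]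
    norm_num
  have hunit : ∀ x j, ‖O x j e₀‖ = 1 := by
    intro x j
    have h := hinner x j
    rw [inner_self_eq_norm_sq_to_K] at h
    have h2 : ‖O x j e₀‖ ^ 2 = 1 := by
      refine Complex.ofReal_inj.mp ?_
      push_cast
      simpa using h
    rw [← Real.sqrt_one, ← h2, Real.sqrt_sq (norm_nonneg _)]
  rw [relGamma2, relGamma2]
  refine le_iInf fun k => le_iInf fun Υ => le_iInf fun Φ => le_iInf fun hfac => ?_
  set Ex : D → (PiLp 2 (fun _ : Fin n => ℂ) →ₗ[ℂ] PiLp 2 (fun _ : Fin n => X)) :=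
    fun x => piBlock (fun j => emb (O x j e₀)) with hEx
  set E0 : PiLp 2 (fun _ : Fin n => ℂ) →ₗ[ℂ] PiLp 2 (fun _ : Fin n => X) :=
    piBlock (fun _ : Fin n => emb e₀) with hE0
  have hExnorm : ∀ x v, ‖Ex x v‖ = ‖v‖ := fun x v =>
    norm_piBlock _ (fun j c => emb_norm _ (hunit x j) c) v
  have hE0norm : ∀ v, ‖E0 v‖ = ‖v‖ := fun v =>
    norm_piBlock _ (fun j c => emb_norm _ he₀ c) v
  refine iInf_le_of_le k ?_
  refine iInf_le_of_le (fun x => piBlock (fun _ : Fin k => Ex x) ∘ₗ Υ x) ?_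
  refine iInf_le_of_le (fun y => piBlock (fun _ : Fin k => E0) ∘ₗ Φ y) ?_
  have key : ∀ x y, LinearMap.adjoint (piBlock (fun _ : Fin k => Ex x)) ∘ₗ
      piBlock (fun _ : Fin k => (piBlock (O x) - piBlock (O y))) ∘ₗ
        piBlock (fun _ : Fin k => E0)
      = piBlock (fun _ : Fin k =>
          piBlock (fun j => scalarMap (1 - (inner ℂ (O x j e₀) (O y j e₀) : ℂ)))) := by
    intro x y
    rw [adjoint_piBlock, piBlock_comp, piBlock_comp]
    congr 1
    funext _
    rw [hEx, hE0, adjoint_piBlock, piBlock_sub, piBlock_comp, piBlock_comp]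
    congr 1
    funext j
    rw [emb_conj]
    congr 1
    rw [LinearMap.sub_apply, inner_sub_right, hinner]
  refine iInf_le_of_le ?_ ?_
  · intro x y
    rw [hfac x y, LinearMap.adjoint_comp, ← key x y]
    rfl
  · refine sup_le_sup (iSup_mono fun x => ?_) (iSup_mono fun y => ?_)
    · exact ENNReal.ofReal_le_ofReal (pow_le_pow_left₀ (norm_nonneg _)
        (opNorm_comp_isometry _ (fun v => norm_piBlock _ (fun _ => hExnorm x) v) _) 2)
    · exact ENNReal.ofReal_le_ofReal (pow_le_pow_left₀ (norm_nonneg _)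
        (opNorm_comp_isometry _ (fun v => norm_piBlock _ (fun _ => hE0norm) v) _) 2)


end
end

section
/- Let I and J be finite sets and X = (X_{ij}) a complex I × J matrix with γ₂(X) < 1, meaning there exist c < 1, k ∈ ℕ, and vectors u_i, v_j ∈ ℂ^k with X_{ij} = ⟨u_i, v_j⟩ for all i, j and (max_i ‖u_i‖)(max_j ‖v_j‖) ≤ c. Then |X_{ij}| < 1 for all i, j, and the I × J matrix Y defined by Y_{ij} = 1/(1 − X_{ij}) satisfies γ₂(Y) ≤ 1/(1 − c); that is, for every ε > 0 there exist k′ ∈ ℕ and vectors u′_i, v′_j ∈ ℂ^{k′} with Y_{ij} = ⟨u′_i, v′_j⟩ for all i, j and (max_i ‖u′_i‖)(max_j ‖v′_j‖) ≤ 1/(1 − c) + ε. -/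
lemma aux_sum_pow {R : Type*} [CommSemiring R] (k n : ℕ) (g : Fin k → R) :
    (∑ l, g l) ^ n = ∑ f : Fin n → Fin k, ∏ t, g (f t) := by
  rw [← Fin.prod_const n (∑ l, g l), Finset.prod_univ_sum]
  simp

lemma aux_geom (x : ℂ) (hx : x ≠ 1) (N : ℕ) :
    1 / (1 - x) = (∑ n ∈ Finset.range N, x ^ n) + x ^ N / (1 - x) := by
  have h : (1:ℂ) - x ≠ 0 := sub_ne_zero.mpr (Ne.symm hx)
  have h2 : x - 1 ≠ 0 := sub_ne_zero.mpr hx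
  rw [geom_sum_eq hx]
  field_simp
  ring

lemma aux_geom_sum_le (r : ℝ) (h0 : 0 ≤ r) (h1 : r < 1) (n : ℕ) :
    ∑ i ∈ Finset.range n, r ^ i ≤ 1/(1-r) := by
  rw [geom_sum_eq h1.ne]
  have h2 : (1:ℝ) - r > 0 := by linarith
  have : (r ^ n - 1) / (r - 1) = (1 - r ^ n)/(1 - r) := by
    rw [div_eq_div_iff (by linarith) (by linarith)]; ring
  rw [this]
  exact div_le_div₀ zero_le_one (by nlinarith [pow_nonneg h0 n]) h2 le_rfl

set_option maxHeartbeats 1600000 in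
lemma aux_main {I J : Type} [Fintype I] [Fintype J] [Nonempty J]
    (X : I → J → ℂ) (a b c ε : ℝ) (hc : c < 1) (hc0 : 0 < c)
    (ha : 0 < a) (hb : 0 < b) (hab : a * b ≤ c) (hε : 0 < ε) (k : ℕ)
    (u : I → EuclideanSpace ℂ (Fin k)) (v : J → EuclideanSpace ℂ (Fin k))
    (hX : ∀ i j, X i j = (inner ℂ (u i) (v j) : ℂ))
    (hua : ∀ i, ‖u i‖ ≤ a) (hvb : ∀ j, ‖v j‖ ≤ b) :
    ∃ (k' : ℕ) (u' : I → EuclideanSpace ℂ (Fin k'))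
      (v' : J → EuclideanSpace ℂ (Fin k')),
      (∀ i j, 1 / (1 - X i j) = (inner ℂ (u' i) (v' j) : ℂ)) ∧
      (∀ i, ‖u' i‖ ≤ Real.sqrt (1/(1-c) + ε)) ∧
      (∀ j, ‖v' j‖ ≤ Real.sqrt (1/(1-c) + ε)) := by
  classical
  have h1c : (0:ℝ) < 1 - c := by linarith
  have habs : ∀ i j, ‖X i j‖ ≤ c := by
    intro i j
    calc ‖X i j‖ = ‖(inner ℂ (u i) (v j) : ℂ)‖ := by rw [hX]
      _ ≤ ‖u i‖ * ‖v j‖ := norm_inner_le_norm _ _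
      _ ≤ a * b := mul_le_mul (hua i) (hvb j) (norm_nonneg _) ha.le
      _ ≤ c := hab
  have hX1 : ∀ i j, X i j ≠ 1 := by
    intro i j h
    have := habs i j
    rw [h] at this
    simp at this; linarith
  have hcardJ : (0:ℝ) < (Fintype.card J : ℝ) := by
    exact_mod_cast Fintype.card_pos
  obtain ⟨N, hN⟩ := exists_pow_lt_of_lt_one
    (show (0:ℝ) < ε^2 * (1-c)^2 / (Fintype.card J : ℝ) by positivity) hc
  set R : I → J → ℂ := fun i j => X i j ^ N / (1 - X i j) with hRdef
  have hR : ∀ i j, ‖R i j‖ ≤ c ^ N / (1 - c) := by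
    intro i j
    have hd : 1 - c ≤ ‖1 - X i j‖ := by
      have h2 := norm_sub_norm_le (1:ℂ) (X i j)
      simp only [norm_one] at h2
      have := habs i j
      have := habs i j
      linarith
    rw [hRdef]
    simp only [norm_div, norm_pow]
    exact div_le_div₀ (pow_nonneg hc0.le N)
      (pow_le_pow_left₀ (norm_nonneg _) (habs i j) N) h1c hd
  set t : ℝ := Real.sqrt c / a with htdef
  set s : ℝ := (Real.sqrt ε)⁻¹ with hsdef
  have hsc : (0:ℝ) < Real.sqrt c := Real.sqrt_pos.mpr hc0
  have ht : 0 < t := div_pos hsc ha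
  have hs : 0 < s := inv_pos.mpr (Real.sqrt_pos.mpr hε)
  have hta : t * a = Real.sqrt c := div_mul_cancel₀ _ ha.ne'
  have htb : b / t ≤ Real.sqrt c := by
    rw [htdef, div_div_eq_mul_div, div_le_iff₀ hsc]
    nlinarith [Real.mul_self_sqrt hc0.le, hab]
  -- index type
  set T := (Σ n : Fin N, (Fin (n : ℕ) → Fin k)) ⊕ J with hTdef
  let e : T ≃ Fin (Fintype.card T) := Fintype.equivFin T
  set F : I → T → ℂ := fun i τ =>
    Sum.elim (fun p : Σ n : Fin N, (Fin (n:ℕ) → Fin k) =>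
        ((t : ℂ)) ^ (p.1 : ℕ) * ∏ m, u i (p.2 m))
      (fun j' => (s : ℂ) * (starRingEnd ℂ) (R i j')) τ with hFdef
  set G : J → T → ℂ := fun j τ =>
    Sum.elim (fun p : Σ n : Fin N, (Fin (n:ℕ) → Fin k) =>
        (((t : ℂ)) ^ (p.1 : ℕ))⁻¹ * ∏ m, v j (p.2 m))
      (fun j' => if j' = j then ((s : ℂ))⁻¹ else 0) τ with hGdef
  have htC : ((t:ℂ)) ≠ 0 := by exact_mod_cast ht.ne'
  have hsC : ((s:ℂ)) ≠ 0 := by exact_mod_cast hs.ne'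
  let U : I → EuclideanSpace ℂ (Fin (Fintype.card T)) := fun i => WithLp.toLp 2 (fun m => F i (e.symm m))
  let V : J → EuclideanSpace ℂ (Fin (Fintype.card T)) := fun j => WithLp.toLp 2 (fun m => G j (e.symm m))
  refine ⟨Fintype.card T, U, V, ?_, ?_, ?_⟩
  · -- inner product identity
    intro i j
    have h1 : (inner ℂ (U i) (V j) : ℂ) = ∑ τ : T, (starRingEnd ℂ) (F i τ) * G j τ := by
      rw [PiLp.inner_apply]
      simp only [RCLike.inner_apply']
      exact Equiv.sum_comp e.symm (fun τ => (starRingEnd ℂ) (F i τ) * G j τ)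
    rw [h1, Fintype.sum_sum_type]
    have hinl : ∑ p : Σ n : Fin N, (Fin (n:ℕ) → Fin k),
        (starRingEnd ℂ) (F i (Sum.inl p)) * G j (Sum.inl p)
        = ∑ n ∈ Finset.range N, X i j ^ n := by
      rw [← Finset.univ_sigma_univ, Finset.sum_sigma]
      rw [← Fin.sum_univ_eq_sum_range (fun n => X i j ^ n) N]
      refine Finset.sum_congr rfl fun n _ => ?_
      have hpow : (X i j) ^ (n:ℕ)
          = ∑ f : Fin (n:ℕ) → Fin k, ∏ m, (starRingEnd ℂ) (u i (f m)) * v j (f m) := by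
        rw [hX, PiLp.inner_apply]
        simp only [RCLike.inner_apply']
        exact aux_sum_pow k (n:ℕ) _
      rw [hpow]
      refine Finset.sum_congr rfl fun f _ => ?_
      simp only [hFdef, hGdef, Sum.elim_inl, map_mul, map_pow, Complex.conj_ofReal]
      rw [Finset.prod_mul_distrib, map_prod]
      field_simp
    have hinr : ∑ j' : J, (starRingEnd ℂ) (F i (Sum.inr j')) * G j (Sum.inr j')
        = R i j := by
      simp only [hFdef, hGdef, Sum.elim_inr, map_mul, Complex.conj_ofReal,
        RingHomCompTriple.comp_apply, mul_ite, mul_zero]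
      rw [Finset.sum_ite_eq' Finset.univ j]
      simp only [Finset.mem_univ, if_true]
      simp only [RingHom.id_apply]
      field_simp
    rw [hinl, hinr, ← aux_geom (X i j) (hX1 i j) N]
  · -- norm bound for u'
    intro i
    have hn2 : ∑ l, ‖u i l‖^2 = ‖u i‖^2 := by
      rw [EuclideanSpace.norm_eq, Real.sq_sqrt (by positivity)]
    rw [EuclideanSpace.norm_eq]
    apply Real.sqrt_le_sqrt
    have hsum : ∑ m, ‖U i m‖^2 = ∑ τ : T, ‖F i τ‖^2 :=
      Equiv.sum_comp e.symm (fun τ => ‖F i τ‖^2)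
    rw [hsum, Fintype.sum_sum_type]
    have hblock : ∑ p : Σ n : Fin N, (Fin (n:ℕ) → Fin k), ‖F i (Sum.inl p)‖^2
        ≤ 1/(1-c) := by
      rw [← Finset.univ_sigma_univ, Finset.sum_sigma]
      have hblockeq : ∀ n : Fin N, ∑ f : Fin (n:ℕ) → Fin k,
          ‖F i (Sum.inl ⟨n, f⟩)‖^2 = (t^2 * ‖u i‖^2)^(n:ℕ) := by
        intro n
        have h2 : ∀ f : Fin (n:ℕ) → Fin k, ‖F i (Sum.inl ⟨n, f⟩)‖^2
            = (t^2)^(n:ℕ) * ∏ m, ‖u i (f m)‖^2 := by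
          intro f
          simp only [hFdef, Sum.elim_inl]
          rw [norm_mul, mul_pow, norm_pow, norm_prod, Complex.norm_real,
            Real.norm_eq_abs, abs_of_pos ht, ← pow_right_comm, ← Finset.prod_pow]
        rw [Finset.sum_congr rfl (fun f _ => h2 f), ← Finset.mul_sum,
          ← aux_sum_pow k (n:ℕ) (fun l => ‖u i l‖^2), hn2, ← mul_pow]
      rw [Finset.sum_congr rfl (fun n _ => hblockeq n)]
      have hc' : t^2 * ‖u i‖^2 ≤ c := by
        have h5 : t * ‖u i‖ ≤ Real.sqrt c := hta ▸ mul_le_mul_of_nonneg_left (hua i) ht.le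
        nlinarith [h5, Real.sq_sqrt hc0.le, mul_nonneg ht.le (norm_nonneg (u i)),
          Real.sqrt_nonneg c]
      calc ∑ n : Fin N, (t^2 * ‖u i‖^2)^(n:ℕ)
          ≤ ∑ n : Fin N, c^(n:ℕ) := by
            refine Finset.sum_le_sum fun n _ => ?_
            exact pow_le_pow_left₀ (by positivity) hc' (n:ℕ)
        _ = ∑ n ∈ Finset.range N, c^n := Fin.sum_univ_eq_sum_range _ N
        _ ≤ 1/(1-c) := aux_geom_sum_le c hc0.le hc N
    have htail : ∑ j' : J, ‖F i (Sum.inr j')‖^2 ≤ ε := by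
      have hs2 : s^2 = ε⁻¹ := by
        rw [hsdef, inv_pow, Real.sq_sqrt hε.le]
      have hterm : ∀ j' : J, ‖F i (Sum.inr j')‖^2 ≤ ε⁻¹ * (c^N/(1-c))^2 := by
        intro j'
        simp only [hFdef, Sum.elim_inr]
        rw [norm_mul, mul_pow, Complex.norm_real, Real.norm_eq_abs, abs_of_pos hs,
          hs2]
        have : ‖(starRingEnd ℂ) (R i j')‖ = ‖R i j'‖ := by
          rw [Complex.norm_conj]
        rw [this]
        have h4 : (0:ℝ) ≤ ‖R i j'‖ := norm_nonneg _
        have := hR i j'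
        gcongr
      calc ∑ j' : J, ‖F i (Sum.inr j')‖^2
          ≤ ∑ _j' : J, ε⁻¹ * (c^N/(1-c))^2 := Finset.sum_le_sum fun j' _ => hterm j'
        _ = (Fintype.card J : ℝ) * (ε⁻¹ * (c^N/(1-c))^2) := by
            rw [Finset.sum_const, Finset.card_univ, nsmul_eq_mul]
        _ ≤ ε := by
            have hN' : c^N * (Fintype.card J : ℝ) < ε^2 * (1-c)^2 :=
              (lt_div_iff₀ hcardJ).mp hN
            have h3 : (c^N)^2 ≤ c^N := by
              nlinarith [pow_le_one₀ hc0.le hc.le (n := N), pow_nonneg hc0.le N]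
            have heq : (Fintype.card J : ℝ) * (ε⁻¹ * (c^N/(1-c))^2)
                = ((Fintype.card J : ℝ) * (c^N)^2) / (ε * (1-c)^2) := by
              field_simp
            rw [heq, div_le_iff₀ (by positivity)]
            nlinarith [hN', h3, mul_le_mul_of_nonneg_left h3 hcardJ.le]
    linarith
  · intro j
    have hn2 : ∑ l, ‖v j l‖^2 = ‖v j‖^2 := by
      rw [EuclideanSpace.norm_eq, Real.sq_sqrt (by positivity)]
    rw [EuclideanSpace.norm_eq]
    apply Real.sqrt_le_sqrt
    have hsum : ∑ m, ‖V j m‖^2 = ∑ τ : T, ‖G j τ‖^2 :=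
      Equiv.sum_comp e.symm (fun τ => ‖G j τ‖^2)
    rw [hsum, Fintype.sum_sum_type]
    have hblock : ∑ p : Σ n : Fin N, (Fin (n:ℕ) → Fin k), ‖G j (Sum.inl p)‖^2
        ≤ 1/(1-c) := by
      rw [← Finset.univ_sigma_univ, Finset.sum_sigma]
      have hblockeq : ∀ n : Fin N, ∑ f : Fin (n:ℕ) → Fin k,
          ‖G j (Sum.inl ⟨n, f⟩)‖^2 = ((t⁻¹)^2 * ‖v j‖^2)^(n:ℕ) := by
        intro n
        have h2 : ∀ f : Fin (n:ℕ) → Fin k, ‖G j (Sum.inl ⟨n, f⟩)‖^2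
            = ((t⁻¹)^2)^(n:ℕ) * ∏ m, ‖v j (f m)‖^2 := by
          intro f
          simp only [hGdef, Sum.elim_inl]
          rw [norm_mul, mul_pow, norm_inv, norm_pow, Complex.norm_real,
            Real.norm_eq_abs, abs_of_pos ht, norm_prod, ← Finset.prod_pow,
            ← inv_pow, pow_right_comm]
        rw [Finset.sum_congr rfl (fun f _ => h2 f), ← Finset.mul_sum,
          ← aux_sum_pow k (n:ℕ) (fun l => ‖v j l‖^2), hn2, ← mul_pow]
      rw [Finset.sum_congr rfl (fun n _ => hblockeq n)]
      have hc' : (t⁻¹)^2 * ‖v j‖^2 ≤ c := by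
        have h5 : t⁻¹ * ‖v j‖ ≤ Real.sqrt c := by
          calc t⁻¹ * ‖v j‖ ≤ t⁻¹ * b :=
                mul_le_mul_of_nonneg_left (hvb j) (inv_nonneg.mpr ht.le)
            _ = b / t := (inv_mul_eq_div t b)
            _ ≤ Real.sqrt c := htb
        nlinarith [h5, Real.sq_sqrt hc0.le,
          mul_nonneg (inv_nonneg.mpr ht.le) (norm_nonneg (v j)), Real.sqrt_nonneg c]
      calc ∑ n : Fin N, ((t⁻¹)^2 * ‖v j‖^2)^(n:ℕ)
          ≤ ∑ n : Fin N, c^(n:ℕ) := by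
            refine Finset.sum_le_sum fun n _ => ?_
            exact pow_le_pow_left₀ (by positivity) hc' (n:ℕ)
        _ = ∑ n ∈ Finset.range N, c^n := Fin.sum_univ_eq_sum_range _ N
        _ ≤ 1/(1-c) := aux_geom_sum_le c hc0.le hc N
    have htail : ∑ j' : J, ‖G j (Sum.inr j')‖^2 ≤ ε := by
      have hterm : ∀ j' : J, ‖G j (Sum.inr j')‖^2 = if j' = j then ε else 0 := by
        intro j'
        simp only [hGdef, Sum.elim_inr]
        split
        · rw [norm_inv, Complex.norm_real, Real.norm_eq_abs, abs_of_pos hs, hsdef,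
            inv_inv, Real.sq_sqrt hε.le]
        · simp
      rw [Finset.sum_congr rfl (fun j' _ => hterm j'), Finset.sum_ite_eq' Finset.univ j]
      simp
    linarith



/-- If a complex matrix `X` indexed by finite sets satisfies
`γ₂(X) < 1`, witnessed by a factorization `X_{ij} = ⟨u_i, v_j⟩` with
`(max_i ‖u_i‖)(max_j ‖v_j‖) ≤ c < 1`, then `|X_{ij}| < 1` for all `i, j`, and the
matrix `Y` with `Y_{ij} = 1/(1 − X_{ij})` satisfies `γ₂(Y) ≤ 1/(1 − c)`: for every
`ε > 0` it admits a factorization `Y_{ij} = ⟨u'_i, v'_j⟩` with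
`(max_i ‖u'_i‖)(max_j ‖v'_j‖) ≤ 1/(1 − c) + ε`. -/
theorem statement17 {I J : Type} [Fintype I] [Fintype J]
    (X : I → J → ℂ) (c : ℝ) (hc : c < 1) (k : ℕ)
    (u : I → EuclideanSpace ℂ (Fin k)) (v : J → EuclideanSpace ℂ (Fin k))
    (hX : ∀ i j, X i j = (inner ℂ (u i) (v j) : ℂ))
    (hnorm : (⨆ i, ‖u i‖) * (⨆ j, ‖v j‖) ≤ c) :
    (∀ i j, ‖X i j‖ < 1) ∧
      ∀ ε : ℝ, 0 < ε →
        ∃ (k' : ℕ) (u' : I → EuclideanSpace ℂ (Fin k'))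
          (v' : J → EuclideanSpace ℂ (Fin k')),
          (∀ i j, 1 / (1 - X i j) = (inner ℂ (u' i) (v' j) : ℂ)) ∧
            (⨆ i, ‖u' i‖) * (⨆ j, ‖v' j‖) ≤ 1 / (1 - c) + ε := by
  classical
  have h1c : (0:ℝ) < 1 - c := by linarith
  have hbu : BddAbove (Set.range fun i => ‖u i‖) :=
    Set.Finite.bddAbove (Set.finite_range _)
  have hbv : BddAbove (Set.range fun j => ‖v j‖) :=
    Set.Finite.bddAbove (Set.finite_range _)
  have habs : ∀ i j, ‖X i j‖ ≤ c := by
    intro i j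
    have h1 : ‖u i‖ ≤ ⨆ i, ‖u i‖ := le_ciSup hbu i
    have h2 : ‖v j‖ ≤ ⨆ j, ‖v j‖ := le_ciSup hbv j
    have h0a : (0:ℝ) ≤ ⨆ i, ‖u i‖ := le_trans (norm_nonneg _) h1
    calc ‖X i j‖ = ‖(inner ℂ (u i) (v j) : ℂ)‖ := by rw [hX]
      _ ≤ ‖u i‖ * ‖v j‖ := norm_inner_le_norm _ _
      _ ≤ (⨆ i, ‖u i‖) * (⨆ j, ‖v j‖) := mul_le_mul h1 h2 (norm_nonneg _) h0a
      _ ≤ c := hnorm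
  refine ⟨fun i j => lt_of_le_of_lt (habs i j) hc, ?_⟩
  intro ε hε
  have hM0 : (0:ℝ) ≤ 1/(1-c) + ε := by positivity
  by_cases hI : Nonempty I
  · by_cases hJ : Nonempty J
    · have ha0 : 0 ≤ ⨆ i, ‖u i‖ :=
        le_trans (norm_nonneg _) (le_ciSup hbu (Classical.arbitrary I))
      have hb0 : 0 ≤ ⨆ j, ‖v j‖ :=
        le_trans (norm_nonneg _) (le_ciSup hbv (Classical.arbitrary J))
      have hc0' : 0 ≤ c := le_trans (mul_nonneg ha0 hb0) hnorm
      by_cases hab : 0 < (⨆ i, ‖u i‖) * (⨆ j, ‖v j‖)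
      · have ha : 0 < ⨆ i, ‖u i‖ := by nlinarith
        have hb : 0 < ⨆ j, ‖v j‖ := by nlinarith
        have hc0 : 0 < c := lt_of_lt_of_le hab hnorm
        obtain ⟨k', u', v', h1, h2, h3⟩ :=
          aux_main X _ _ c ε hc hc0 ha hb hnorm hε k u v hX
            (fun i => le_ciSup hbu i) (fun j => le_ciSup hbv j)
        refine ⟨k', u', v', h1, ?_⟩
        have hsup1 : (⨆ i, ‖u' i‖) ≤ Real.sqrt (1/(1-c)+ε) := ciSup_le h2
        have hsup2 : (⨆ j, ‖v' j‖) ≤ Real.sqrt (1/(1-c)+ε) := ciSup_le h3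
        have hsup2' : 0 ≤ ⨆ j, ‖v' j‖ :=
          le_trans (norm_nonneg (v' (Classical.arbitrary J)))
            (le_ciSup (Set.Finite.bddAbove (Set.finite_range fun j => ‖v' j‖))
              (Classical.arbitrary J))
        calc (⨆ i, ‖u' i‖) * (⨆ j, ‖v' j‖)
            ≤ Real.sqrt (1/(1-c)+ε) * Real.sqrt (1/(1-c)+ε) :=
              mul_le_mul hsup1 hsup2 hsup2' (Real.sqrt_nonneg _)
          _ = 1/(1-c) + ε := Real.mul_self_sqrt hM0
      · push_neg at hab
        have hX0 : ∀ i j, X i j = 0 := by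
          intro i j
          have h5 : ‖X i j‖ ≤ 0 := by
            calc ‖X i j‖ = ‖(inner ℂ (u i) (v j) : ℂ)‖ := by rw [hX]
              _ ≤ ‖u i‖ * ‖v j‖ := norm_inner_le_norm _ _
              _ ≤ (⨆ i, ‖u i‖) * (⨆ j, ‖v j‖) :=
                  mul_le_mul (le_ciSup hbu i) (le_ciSup hbv j) (norm_nonneg _) ha0
              _ ≤ 0 := hab
          exact norm_eq_zero.mp (le_antisymm h5 (norm_nonneg _))
        refine ⟨1, fun _ => EuclideanSpace.single 0 1,
          fun _ => EuclideanSpace.single 0 1, ?_, ?_⟩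
        · intro i j
          rw [hX0 i j, EuclideanSpace.inner_single_left]
          simp [EuclideanSpace.single_apply]
        · simp only [EuclideanSpace.norm_single, norm_one, ciSup_const]
          have h6 : (1:ℝ) ≤ 1/(1-c) := by
            rw [le_div_iff₀ h1c]; linarith
          linarith
    · haveI := not_nonempty_iff.mp hJ
      refine ⟨0, fun _ => 0, fun _ => 0, fun i j => (hJ ⟨j⟩).elim, ?_⟩
      have : (⨆ j : J, ‖(0 : EuclideanSpace ℂ (Fin 0))‖) = 0 := Real.iSup_of_isEmpty _
      rw [this, mul_zero]
      positivity
  · haveI := not_nonempty_iff.mp hI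
    refine ⟨0, fun _ => 0, fun _ => 0, fun i j => (hI ⟨i⟩).elim, ?_⟩
    have : (⨆ i : I, ‖(0 : EuclideanSpace ℂ (Fin 0))‖) = 0 := Real.iSup_of_isEmpty _
    rw [this, zero_mul]
    positivity
end
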